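/- arXiv:2501.02072 — 8 statements merged into one kernel-verified Lean document; each statement's English description precedes it below -/
import Mathlib

section
/- Let S be a unital ring, p ≥ 3 an odd natural number, and g a central element of S with g^p = 1. Then for every t ≥ 0, the product ∏_{k=0}^{t} (1 + g^(2^k)) can be written as a^2 + b^2 for some a, b ∈ S. -/
theorem stmt0 {S : Type*} [Ring S] (p : ℕ) (hp : 3 ≤ p) (hodd : Odd p)
    (g : S) (hg : g ∈ Set.center S) (hgp : g ^ p = 1) (t : ℕ) :
    ∃ a b : S, ((List.range (t + 1)).map (fun k => 1 + g ^ (2 ^ k))).prod = a ^ 2 + b ^ 2 := by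
  have hgZ : g ∈ Subring.center S := hg
  set g' : Subring.center S := ⟨g, hgZ⟩ with hg'
  have hgp' : g' ^ p = 1 := by
    apply Subtype.ext
    simpa using hgp
  obtain ⟨j, hj⟩ := hodd
  have hsq : (g' ^ (j + 1)) ^ 2 = g' := by
    rw [← pow_mul]
    have : (j + 1) * 2 = p + 1 := by omega
    rw [this, pow_succ, hgp', one_mul]
  have key : ∀ n : ℕ, ∃ a b : Subring.center S,
      ((List.range (n + 1)).map (fun k => 1 + g' ^ (2 ^ k))).prod = a ^ 2 + b ^ 2 := by
    intro n
    induction n with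
    | zero =>
      refine ⟨1, g' ^ (j + 1), ?_⟩
      simp only [List.range_succ, List.range_zero, List.nil_append, List.map_cons,
        List.map_nil, List.prod_cons, List.prod_nil, mul_one, hsq, one_pow, pow_zero, pow_one]
    | succ m ih =>
      obtain ⟨a, b, hab⟩ := ih
      have hfac : (1 : Subring.center S) + g' ^ (2 ^ (m + 1))
          = 1 ^ 2 + ((g' ^ (j + 1)) ^ (2 ^ (m + 1))) ^ 2 := by
        rw [one_pow, ← pow_mul, mul_comm (2 ^ (m + 1)) 2, pow_mul, hsq]
      refine ⟨a * 1 - b * (g' ^ (j + 1)) ^ (2 ^ (m + 1)),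
        a * (g' ^ (j + 1)) ^ (2 ^ (m + 1)) + b * 1, ?_⟩
      rw [List.range_succ, List.map_append, List.prod_append]
      simp only [List.map_cons, List.map_nil, List.prod_cons, List.prod_nil, mul_one]
      rw [hab, hfac]
      ring
  obtain ⟨a, b, h⟩ := key t
  refine ⟨a, b, ?_⟩
  have h2 := congrArg (Subring.center S).subtype h
  rw [map_list_prod, List.map_map] at h2
  simpa [Function.comp_def, hg'] using h2
end

section
/- Let S be a unital ring, p ≥ 3 an odd natural number, and g a central element of S with g^p = 1. If n ∈ ℕ is such that p divides 2^n + 1, then there exist α, β ∈ S with (α^2 + β^2 + g^(2^n)) · (g - 1) = 0. -/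
open Polynomial

lemma brahm (n : ℕ) : ∃ a b : Polynomial ℤ,
    a ^ 2 + b ^ 2 = ∏ k ∈ Finset.range n, (1 + (X ^ 2) ^ (2 ^ k)) := by
  induction n with
  | zero => exact ⟨1, 0, by simp⟩
  | succ n ih =>
    obtain ⟨a, b, hab⟩ := ih
    refine ⟨a - b * X ^ (2 ^ n), a * X ^ (2 ^ n) + b, ?_⟩
    rw [Finset.prod_range_succ, ← hab]
    have h : (X ^ 2 : Polynomial ℤ) ^ (2 ^ n) = (X ^ (2 ^ n)) ^ 2 := by
      rw [← pow_mul, ← pow_mul, Nat.mul_comm]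
    rw [h]; ring

lemma geom (n : ℕ) :
    (∏ k ∈ Finset.range n, (1 + (X : Polynomial ℤ) ^ (2 ^ k))) * (X - 1)
      = X ^ (2 ^ n) - 1 := by
  induction n with
  | zero => simp
  | succ n ih =>
    rw [Finset.prod_range_succ, mul_right_comm, ih, pow_succ, pow_mul]
    ring

theorem stmt1 {S : Type*} [Ring S] (p : ℕ) (hp : 3 ≤ p) (hodd : Odd p)
    (g : S) (hg : g ∈ Set.center S) (hgp : g ^ p = 1) (n : ℕ) (hn : p ∣ 2 ^ n + 1) :
    ∃ α β : S, (α ^ 2 + β ^ 2 + g ^ (2 ^ n)) * (g - 1) = 0 := by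
  obtain ⟨a, b, hab⟩ := brahm n
  obtain ⟨k, hk⟩ := hn
  set Q : Polynomial ℤ := ∏ j ∈ Finset.range n, (1 + X ^ (2 ^ j)) with hQ
  set h : S := g ^ ((p + 1) / 2) with hh
  have hh2 : h ^ 2 = g := by
    rw [hh, ← pow_mul]
    have hdiv : (p + 1) / 2 * 2 = p + 1 := by
      obtain ⟨m, hm⟩ := hodd; omega
    rw [hdiv, pow_succ, hgp, one_mul]
  have hcomp : Q.comp (X ^ 2) = a ^ 2 + b ^ 2 := by
    rw [hab, hQ, Polynomial.prod_comp]
    refine Finset.prod_congr rfl fun i _ => ?_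
    simp [Polynomial.add_comp, Polynomial.pow_comp]
  refine ⟨aeval h a, aeval h b, ?_⟩
  have h1 : (aeval h a) ^ 2 + (aeval h b) ^ 2 = aeval g Q := by
    rw [← map_pow, ← map_pow, ← map_add, ← hcomp, Polynomial.aeval_comp]
    rw [map_pow, Polynomial.aeval_X, hh2]
  have h3 : (Q + X ^ 2 ^ n) * (X - 1) = X ^ (2 ^ n + 1) - 1 := by
    rw [add_mul, hQ, geom, pow_succ]; ring
  have h2 : (aeval g Q + g ^ 2 ^ n) * (g - 1) = aeval g ((Q + X ^ 2 ^ n) * (X - 1)) := by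
    simp [map_mul, map_add, map_pow, map_sub]
  rw [h1, h2, h3, hk]
  simp [map_sub, map_pow, pow_mul, hgp]
end

section
/- Let S be a unital ring, p ≥ 3 odd, g central in S with g^p = 1, and n with p ∣ 2^n + 1. Writing 2^n - 1 = pq + (p - 2) for a natural number q, one has ∏_{k=0}^{n-1} (1 + g^(2^k)) = (q+1) · (∑_{i=0}^{p-1} g^i) - g^(p-1). -/
theorem stmt2 {S : Type*} [Ring S] (p n q : ℕ) (hp : 3 ≤ p) (hodd : Odd p)
    (g : S) (hg : g ∈ Set.center S) (hgp : g ^ p = 1) (hn : p ∣ 2 ^ n + 1)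
    (hq : 2 ^ n - 1 = p * q + (p - 2)) :
    ((List.range n).map (fun k => 1 + g ^ (2 ^ k))).prod
      = ((q : S) + 1) * (∑ i ∈ Finset.range p, g ^ i) - g ^ (p - 1) := by
  have key : ∀ m, ((List.range m).map (fun k => 1 + g ^ (2 ^ k))).prod
      = ∑ i ∈ Finset.range (2 ^ m), g ^ i := by
    intro m
    induction m with
    | zero => simp
    | succ m ih =>
      rw [List.range_succ, List.map_append, List.prod_append, ih]
      simp only [List.map_cons, List.map_nil, List.prod_cons, List.prod_nil, mul_one]
      rw [mul_add, mul_one]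
      have h2 : 2 ^ (m + 1) = 2 ^ m + 2 ^ m := by ring
      rw [h2, Finset.sum_range_add, Finset.sum_mul]
      congr 1
      exact Finset.sum_congr rfl fun i _ => by rw [← pow_add, Nat.add_comm]
  have hp2 : 2 ^ n = p * q + (p - 1) := by
    have h1 : 1 ≤ 2 ^ n := Nat.one_le_two_pow
    omega
  have hshift : ∀ r i, g ^ (p * r + i) = g ^ i := fun r i => by
    rw [pow_add, pow_mul, hgp, one_pow, one_mul]
  have hpq : ∀ r, (∑ i ∈ Finset.range (p * r), g ^ i)
      = (r : S) * ∑ i ∈ Finset.range p, g ^ i := by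
    intro r
    induction r with
    | zero => simp
    | succ r ih =>
      have h : p * (r + 1) = p * r + p := by ring
      rw [h, Finset.sum_range_add, ih, Finset.sum_congr rfl fun i _ => hshift r i]
      push_cast [add_mul, one_mul]; rfl
  rw [key, hp2, Finset.sum_range_add, hpq,
    Finset.sum_congr rfl fun i _ => hshift q i]
  have hp1 : p - 1 + 1 = p := by omega
  have h := Finset.sum_range_succ (fun i => g ^ i) (p - 1)
  rw [hp1] at h
  have h2 : ∑ i ∈ Finset.range (p - 1), g ^ i
      = (∑ i ∈ Finset.range p, g ^ i) - g ^ (p - 1) := by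
    rw [h, add_sub_cancel_right]
  rw [h2, add_mul, one_mul, add_sub_assoc]
end

section
/- Let R be a ring with involution *. If p is a projection of R (p² = p = p*) such that both corner rings pRp and (1-p)R(1-p) are *-clean (with respect to the restricted involution), then R is *-clean. -/
/-- A ring with involution σ is σ-clean if every element is a unit plus a projection. -/
def StarClean {R : Type*} [Ring R] (σ : R → R) : Prop :=
  ∀ a : R, ∃ u p : R, IsUnit u ∧ p * p = p ∧ σ p = p ∧ a = u + p

/-- The corner ring `eRe` (with identity `e`) is σ-clean: every element `e*a*e` is the
sum of a unit of the corner ring and a projection of the corner ring. -/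
def CornerStarClean {R : Type*} [Ring R] (σ : R → R) (e : R) : Prop :=
  ∀ a : R, ∃ u v q : R,
    u = e * u * e ∧ v = e * v * e ∧ q = e * q * e ∧
    u * v = e ∧ v * u = e ∧ q * q = q ∧ σ q = q ∧ e * a * e = u + q

lemma corner_left' {R : Type*} [Ring R] {e x : R} (he : e * e = e) (hx : x = e * x * e) :
    e * x = x := by
  conv_lhs => rw [hx]
  conv_rhs => rw [hx]
  calc e * (e * x * e) = (e * e) * (x * e) := by noncomm_ring
    _ = e * (x * e) := by rw [he]
    _ = e * x * e := by noncomm_ring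

lemma corner_right' {R : Type*} [Ring R] {e x : R} (he : e * e = e) (hx : x = e * x * e) :
    x * e = x := by
  conv_lhs => rw [hx]
  conv_rhs => rw [hx]
  calc (e * x * e) * e = (e * x) * (e * e) := by noncomm_ring
    _ = (e * x) * e := by rw [he]

lemma zero_left' {R : Type*} [Ring R] {y e f : R} (hy : e * y = y) (hef : f * e = 0) :
    f * y = 0 := by
  rw [← hy, ← mul_assoc, hef, zero_mul]

lemma zero_right' {R : Type*} [Ring R] {x e f : R} (hx : x * e = x) (hef : e * f = 0) :
    x * f = 0 := by
  rw [← hx, mul_assoc, hef, mul_zero]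

lemma unit_one_add' {R : Type*} [Ring R] {w : R} (h : w * w = 0) : IsUnit (1 + w) := by
  refine ⟨⟨1 + w, 1 - w, ?_, ?_⟩, rfl⟩
  · have e : (1 + w) * (1 - w) = 1 - w * w := by noncomm_ring
    rw [e, h, sub_zero]
  · have e : (1 - w) * (1 + w) = 1 - w * w := by noncomm_ring
    rw [e, h, sub_zero]

theorem stmt6 {R : Type*} [Ring R] (σ : R → R)
    (hadd : ∀ a b : R, σ (a + b) = σ a + σ b) (hmul : ∀ a b : R, σ (a * b) = σ b * σ a)
    (hinv : ∀ a : R, σ (σ a) = a)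
    (p : R) (hp : p * p = p) (hps : σ p = p)
    (h1 : CornerStarClean σ p) (h2 : CornerStarClean σ (1 - p)) :
    StarClean σ := by
  intro a
  obtain ⟨u1, v1, f1, hu1, hv1, hf1, huv1, hvu1, hff1, hsf1, hd1⟩ := h1 a
  obtain ⟨u2, v2, f2, hu2, hv2, hf2, huv2, hvu2, hff2, hsf2, hd2⟩ := h2 (a - a * v1 * a)
  -- basic idempotent facts
  have hpq0 : p * (1 - p) = 0 := by rw [mul_sub, mul_one, hp, sub_self]
  have hqp0 : (1 - p) * p = 0 := by rw [sub_mul, one_mul, hp, sub_self]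
  have hqq : (1 - p) * (1 - p) = (1 - p) := by rw [sub_mul, one_mul, hpq0, sub_zero]
  -- absorption facts
  have pu1 : p * u1 = u1 := corner_left' hp hu1
  have u1p : u1 * p = u1 := corner_right' hp hu1
  have pv1 : p * v1 = v1 := corner_left' hp hv1
  have v1p : v1 * p = v1 := corner_right' hp hv1
  have pf1 : p * f1 = f1 := corner_left' hp hf1
  have f1p : f1 * p = f1 := corner_right' hp hf1
  have qu2 : (1 - p) * u2 = u2 := corner_left' hqq hu2
  have u2q : u2 * (1 - p) = u2 := corner_right' hqq hu2
  have qv2 : (1 - p) * v2 = v2 := corner_left' hqq hv2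
  have v2q : v2 * (1 - p) = v2 := corner_right' hqq hv2
  have qf2 : (1 - p) * f2 = f2 := corner_left' hqq hf2
  have f2q : f2 * (1 - p) = f2 := corner_right' hqq hf2
  -- annihilation facts
  have qv10 : (1 - p) * v1 = 0 := zero_left' pv1 hqp0
  have v1q0 : v1 * (1 - p) = 0 := zero_right' v1p hpq0
  have qu10 : (1 - p) * u1 = 0 := zero_left' pu1 hqp0
  have pu20 : p * u2 = 0 := zero_left' qu2 hpq0
  have pv20 : p * v2 = 0 := zero_left' qv2 hpq0
  have pf20 : p * f2 = 0 := zero_left' qf2 hpq0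
  have qf10 : (1 - p) * f1 = 0 := zero_left' pf1 hqp0
  -- cross products
  have u2v1 : u2 * v1 = 0 := zero_right' u2q qv10
  have v1u2 : v1 * u2 = 0 := zero_right' v1p pu20
  have u1v2 : u1 * v2 = 0 := zero_right' u1p pv20
  have v2u1 : v2 * u1 = 0 := zero_right' v2q qu10
  have f1f2 : f1 * f2 = 0 := zero_right' f1p pf20
  have f2f1 : f2 * f1 = 0 := zero_right' f2q qf10
  -- the three units
  have hw : ((1 - p) * a * p * v1) * ((1 - p) * a * p * v1) = 0 := by
    have e : ((1 - p) * a * p * v1) * ((1 - p) * a * p * v1)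
        = ((1 - p) * (a * p)) * ((v1 * (1 - p)) * ((a * p) * v1)) := by noncomm_ring
    rw [e, v1q0, zero_mul, mul_zero]
  have hr : (v1 * a * (1 - p)) * (v1 * a * (1 - p)) = 0 := by
    have e : (v1 * a * (1 - p)) * (v1 * a * (1 - p))
        = (v1 * a) * (((1 - p) * v1) * (a * (1 - p))) := by noncomm_ring
    rw [e, qv10, zero_mul, mul_zero]
  have hD : IsUnit (u1 + u2) := by
    refine ⟨⟨u1 + u2, v1 + v2, ?_, ?_⟩, rfl⟩
    · have e : (u1 + u2) * (v1 + v2) = u1 * v1 + u1 * v2 + u2 * v1 + u2 * v2 := by noncomm_ring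
      rw [e, huv1, huv2, u1v2, u2v1]; abel
    · have e : (v1 + v2) * (u1 + u2) = v1 * u1 + v1 * u2 + v2 * u1 + v2 * u2 := by noncomm_ring
      rw [e, hvu1, hvu2, v1u2, v2u1]; abel
  have hU : IsUnit ((1 + (1 - p) * a * p * v1) * ((u1 + u2) * (1 + v1 * a * (1 - p)))) :=
    (unit_one_add' hw).mul (hD.mul (unit_one_add' hr))
  -- the key factorization
  have e1 : u1 = p * a * p - f1 := eq_sub_of_add_eq hd1.symm
  have e2 : u2 = (1 - p) * a * (1 - p) - (1 - p) * a * (v1 * (a * (1 - p))) - f2 := by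
    have expand : (1 - p) * (a - a * v1 * a) * (1 - p)
        = (1 - p) * a * (1 - p) - (1 - p) * a * (v1 * (a * (1 - p))) := by noncomm_ring
    rw [expand] at hd2
    exact eq_sub_of_add_eq hd2.symm
  have key : (1 + (1 - p) * a * p * v1) * ((u1 + u2) * (1 + v1 * a * (1 - p)))
      = a - (f1 + f2) := by
    calc (1 + (1 - p) * a * p * v1) * ((u1 + u2) * (1 + v1 * a * (1 - p)))
        = (u1 + u2) + ((u1 * v1) * (a * (1 - p)) + (u2 * v1) * (a * (1 - p)))
          + (((1 - p) * (a * p)) * (v1 * u1) + ((1 - p) * (a * p)) * (v1 * u2))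
          + (((1 - p) * (a * p)) * ((v1 * u1) * (v1 * (a * (1 - p))))
             + ((1 - p) * (a * p)) * ((v1 * u2) * (v1 * (a * (1 - p))))) := by noncomm_ring
      _ = (u1 + u2) + (p * (a * (1 - p)) + 0 * (a * (1 - p)))
          + (((1 - p) * (a * p)) * p + ((1 - p) * (a * p)) * 0)
          + (((1 - p) * (a * p)) * (p * (v1 * (a * (1 - p))))
             + ((1 - p) * (a * p)) * (0 * (v1 * (a * (1 - p))))) := by
            rw [huv1, hvu1, u2v1, v1u2]
      _ = u1 + u2 + p * (a * (1 - p)) + (1 - p) * a * (p * p)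
          + (1 - p) * a * (((p * p) * v1) * (a * (1 - p))) := by noncomm_ring
      _ = u1 + u2 + p * (a * (1 - p)) + (1 - p) * a * p
          + (1 - p) * a * (v1 * (a * (1 - p))) := by rw [hp, pv1]
      _ = a - (f1 + f2) := by rw [e1, e2]; noncomm_ring
  refine ⟨a - (f1 + f2), f1 + f2, key ▸ hU, ?_, ?_, by abel⟩
  · have e : (f1 + f2) * (f1 + f2) = f1 * f1 + f1 * f2 + f2 * f1 + f2 * f2 := by noncomm_ring
    rw [e, hff1, hff2, f1f2, f2f1]; abel
  · rw [hadd, hsf1, hsf2]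
end

section
/- Let R be a commutative unital ring with 2 ∈ U(R), G = H × C₂ with C₂ = ⟨a⟩ cyclic of order 2, and * an involution of RG induced by a group involution of G fixing a. If RH is *-clean (with the restricted involution), then RG is *-clean. -/
namespace Stmt9Aux

variable (R H : Type*) [CommRing R] [Group H] [Invertible (2 : R)]

/-- The group element `a = (1, ofAdd 1)` as an element of the group algebra. -/
noncomputable def AA : MonoidAlgebra R (H × Multiplicative (ZMod 2)) :=
  MonoidAlgebra.single (1, Multiplicative.ofAdd (1 : ZMod 2)) 1

/-- Embedding `RH → RG` via `h ↦ (h, 1)`. -/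
noncomputable def iot : MonoidAlgebra R H → MonoidAlgebra R (H × Multiplicative (ZMod 2)) :=
  MonoidAlgebra.mapDomain fun h => (h, 1)

/-- The map `RH → RG` via `h ↦ (h, a)`. -/
noncomputable def iotA : MonoidAlgebra R H → MonoidAlgebra R (H × Multiplicative (ZMod 2)) :=
  MonoidAlgebra.mapDomain fun h => (h, Multiplicative.ofAdd (1 : ZMod 2))

/-- The idempotent `(1 + a)/2`. -/
noncomputable def ep : MonoidAlgebra R (H × Multiplicative (ZMod 2)) :=
  (⅟2 : R) • (1 + AA R H)

/-- The idempotent `(1 - a)/2`. -/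
noncomputable def em : MonoidAlgebra R (H × Multiplicative (ZMod 2)) :=
  (⅟2 : R) • (1 - AA R H)

variable {R H}

theorem iot_mul (x y : MonoidAlgebra R H) : iot R H (x * y) = iot R H x * iot R H y :=
  MonoidAlgebra.mapDomain_mul (MonoidHom.inl H (Multiplicative (ZMod 2))) x y

theorem iot_one : iot R H 1 = 1 :=
  MonoidAlgebra.mapDomain_one (MonoidHom.inl H (Multiplicative (ZMod 2)))

theorem iot_add (x y : MonoidAlgebra R H) : iot R H (x + y) = iot R H x + iot R H y :=
  MonoidAlgebra.mapDomain_add _ _ _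

theorem iot_zero : iot R H 0 = 0 := MonoidAlgebra.mapDomain_zero _

theorem iot_neg (x : MonoidAlgebra R H) : iot R H (-x) = -(iot R H x) :=
  by rw [eq_neg_iff_add_eq_zero, ← iot_add, neg_add_cancel, iot_zero]

theorem iot_single (h : H) (b : R) :
    iot R H (MonoidAlgebra.single h b) = MonoidAlgebra.single ((h, 1) : H × Multiplicative (ZMod 2)) b :=
  MonoidAlgebra.mapDomain_single

theorem iotA_single (h : H) (b : R) :
    iotA R H (MonoidAlgebra.single h b) =
      MonoidAlgebra.single ((h, Multiplicative.ofAdd (1 : ZMod 2)) : H × Multiplicative (ZMod 2)) b :=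
  MonoidAlgebra.mapDomain_single

theorem AA_mul_AA : (AA R H) * (AA R H) = 1 := by
  rw [AA, MonoidAlgebra.single_mul_single]
  have h2 : Multiplicative.ofAdd (1 : ZMod 2) * Multiplicative.ofAdd (1 : ZMod 2) = 1 := by
    decide
  rw [Prod.mk_mul_mk, one_mul, h2, mul_one, MonoidAlgebra.one_def]
  rfl

theorem mul_AA (q : MonoidAlgebra R H) : iot R H q * AA R H = iotA R H q := by
  induction q using MonoidAlgebra.induction_linear with
  | zero => rw [iot_zero, zero_mul, iotA, MonoidAlgebra.mapDomain_zero]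
  | add f g hf hg =>
      rw [iot_add, add_mul, hf, hg, iotA, MonoidAlgebra.mapDomain_add]
  | single h b =>
      rw [iot_single, iotA_single, AA, MonoidAlgebra.single_mul_single, mul_one,
        Prod.mk_mul_mk, mul_one, one_mul]

theorem AA_mul (q : MonoidAlgebra R H) : AA R H * iot R H q = iotA R H q := by
  induction q using MonoidAlgebra.induction_linear with
  | zero => rw [iot_zero, mul_zero, iotA, MonoidAlgebra.mapDomain_zero]
  | add f g hf hg =>
      rw [iot_add, mul_add, hf, hg, iotA, MonoidAlgebra.mapDomain_add]
  | single h b =>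
      rw [iot_single, iotA_single, AA, MonoidAlgebra.single_mul_single, one_mul,
        Prod.mk_mul_mk, one_mul, mul_one]

theorem ep_add_em : ep R H + em R H = 1 := by
  rw [ep, em, ← smul_add]
  have h1 : (1 + AA R H) + (1 - AA R H) = (2 : R) • (1 : MonoidAlgebra R _) := by
    rw [two_smul]; abel
  rw [h1, smul_smul, invOf_mul_self, one_smul]

theorem ep_sub_em : ep R H - em R H = AA R H := by
  rw [ep, em, ← smul_sub]
  have h1 : (1 + AA R H) - (1 - AA R H) = (2 : R) • (AA R H) := by
    rw [two_smul]; abel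
  rw [h1, smul_smul, invOf_mul_self, one_smul]

theorem smul_mul_smul' (u v : MonoidAlgebra R (H × Multiplicative (ZMod 2))) :
    ((⅟2 : R) • u) * ((⅟2 : R) • v) = ((⅟2 : R) * (⅟2 : R)) • (u * v) := by
  rw [smul_mul_assoc, mul_smul_comm, smul_smul]

theorem ep_mul_ep : ep R H * ep R H = ep R H := by
  rw [ep, smul_mul_smul']
  have h1 : (1 + AA R H) * (1 + AA R H) = (2 : R) • (1 + AA R H) := by
    rw [mul_add, mul_one, add_mul, one_mul, AA_mul_AA, two_smul]; abel
  rw [h1, smul_smul, mul_assoc, invOf_mul_self, mul_one]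

theorem em_mul_em : em R H * em R H = em R H := by
  rw [em, smul_mul_smul']
  have h1 : (1 - AA R H) * (1 - AA R H) = (2 : R) • (1 - AA R H) := by
    rw [mul_sub, mul_one, sub_mul, one_mul, AA_mul_AA, two_smul]; abel
  rw [h1, smul_smul, mul_assoc, invOf_mul_self, mul_one]

theorem ep_mul_em : ep R H * em R H = 0 := by
  rw [ep, em, smul_mul_smul']
  have h1 : (1 + AA R H) * (1 - AA R H) = 0 := by
    rw [mul_sub, mul_one, add_mul, one_mul, AA_mul_AA]; abel
  rw [h1, smul_zero]

theorem em_mul_ep : em R H * ep R H = 0 := by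
  rw [ep, em, smul_mul_smul']
  have h1 : (1 - AA R H) * (1 + AA R H) = 0 := by
    rw [mul_add, mul_one, sub_mul, one_mul, AA_mul_AA]; abel
  rw [h1, smul_zero]

theorem ep_comm (q : MonoidAlgebra R H) : ep R H * iot R H q = iot R H q * ep R H := by
  rw [ep, smul_mul_assoc, mul_smul_comm, add_mul, mul_add, one_mul, mul_one, AA_mul, mul_AA]

theorem em_comm (q : MonoidAlgebra R H) : em R H * iot R H q = iot R H q * em R H := by
  rw [em, smul_mul_assoc, mul_smul_comm, sub_mul, mul_sub, one_mul, mul_one, AA_mul, mul_AA]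

theorem iot_mul_ep (q : MonoidAlgebra R H) :
    iot R H q * ep R H = (⅟2 : R) • (iot R H q + iotA R H q) := by
  rw [ep, mul_smul_comm, mul_add, mul_one, mul_AA]

theorem iot_mul_em (q : MonoidAlgebra R H) :
    iot R H q * em R H = (⅟2 : R) • (iot R H q - iotA R H q) := by
  rw [em, mul_smul_comm, mul_sub, mul_one, mul_AA]

theorem key (x y x' y' : MonoidAlgebra R H) :
    (iot R H x * ep R H + iot R H y * em R H) * (iot R H x' * ep R H + iot R H y' * em R H) =
      iot R H (x * x') * ep R H + iot R H (y * y') * em R H := by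
  have h1 : ∀ (q q' : MonoidAlgebra R H) (e f : MonoidAlgebra R (H × Multiplicative (ZMod 2))),
      e * iot R H q' = iot R H q' * e →
      (iot R H q * e) * (iot R H q' * f) = iot R H (q * q') * (e * f) := by
    intro q q' e f hco
    rw [mul_assoc, ← mul_assoc e, hco, iot_mul, mul_assoc, mul_assoc]
  rw [add_mul, mul_add, mul_add,
    h1 x x' _ _ (ep_comm x'), h1 x y' _ _ (ep_comm y'),
    h1 y x' _ _ (em_comm x'), h1 y y' _ _ (em_comm y'),
    ep_mul_ep, ep_mul_em, em_mul_ep, em_mul_em, mul_zero, mul_zero]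
  abel

theorem decomp (f : MonoidAlgebra R (H × Multiplicative (ZMod 2))) :
    ∃ x y : MonoidAlgebra R H, f = iot R H x * ep R H + iot R H y * em R H := by
  induction f using MonoidAlgebra.induction_linear with
  | zero => exact ⟨0, 0, by rw [iot_zero, zero_mul, zero_mul, add_zero]⟩
  | add f g hf hg =>
      obtain ⟨x₁, y₁, h₁⟩ := hf
      obtain ⟨x₂, y₂, h₂⟩ := hg
      refine ⟨x₁ + x₂, y₁ + y₂, ?_⟩
      rw [iot_add, iot_add, add_mul, add_mul, h₁, h₂]; abel
  | single g b =>
      obtain ⟨h, c⟩ := g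
      rcases (by decide : ∀ z : Multiplicative (ZMod 2),
          z = 1 ∨ z = Multiplicative.ofAdd 1) c with hc | hc
      · subst hc
        refine ⟨MonoidAlgebra.single h b, MonoidAlgebra.single h b, ?_⟩
        rw [← mul_add, ep_add_em, mul_one, iot_single]
      · subst hc
        refine ⟨MonoidAlgebra.single h b, -MonoidAlgebra.single h b, ?_⟩
        rw [iot_neg, neg_mul, ← sub_eq_add_neg, ← mul_sub, ep_sub_em, mul_AA, iotA_single]

theorem mapDomain_comp' {M N O : Type*} (f : M → N) (g : N → O) (x : MonoidAlgebra R M) :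
    MonoidAlgebra.mapDomain (g ∘ f) x = MonoidAlgebra.mapDomain g (MonoidAlgebra.mapDomain f x) := by
  ext; simp [Finsupp.mapDomain_comp]

end Stmt9Aux

theorem stmt9 {R H : Type*} [CommRing R] [Invertible (2 : R)] [Group H]
    (σ : H × Multiplicative (ZMod 2) → H × Multiplicative (ZMod 2))
    (hanti : ∀ g h, σ (g * h) = σ h * σ g) (hinv : ∀ g, σ (σ g) = g)
    (hfix : σ (1, Multiplicative.ofAdd (1 : ZMod 2)) = (1, Multiplicative.ofAdd (1 : ZMod 2)))
    (σH : H → H) (hres : ∀ h : H, σ (h, 1) = (σH h, 1))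
    (hH : StarClean (R := MonoidAlgebra R H) (MonoidAlgebra.mapDomain σH)) :
    StarClean (R := MonoidAlgebra R (H × Multiplicative (ZMod 2))) (MonoidAlgebra.mapDomain σ) := by
  classical
  open Stmt9Aux in
  intro r
  obtain ⟨x, y, hr⟩ := Stmt9Aux.decomp r
  obtain ⟨u₁, p₁, hu₁, hpp₁, hsp₁, hx⟩ := hH x
  obtain ⟨u₂, p₂, hu₂, hpp₂, hsp₂, hy⟩ := hH y
  -- σ interacts with iot and iotA
  have hσa : ∀ h : H, σ (h, Multiplicative.ofAdd (1 : ZMod 2)) =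
      (σH h, Multiplicative.ofAdd (1 : ZMod 2)) := by
    intro h
    have h1 : ((1 : H), Multiplicative.ofAdd (1 : ZMod 2)) * (h, 1) =
        (h, Multiplicative.ofAdd (1 : ZMod 2)) := by
      rw [Prod.mk_mul_mk, one_mul, mul_one]
    rw [← h1, hanti, hres, hfix, Prod.mk_mul_mk, mul_one, one_mul]
  have σι : ∀ q : MonoidAlgebra R H,
      MonoidAlgebra.mapDomain σ (Stmt9Aux.iot R H q) = Stmt9Aux.iot R H (MonoidAlgebra.mapDomain σH q) := by
    intro q
    rw [Stmt9Aux.iot, ← Stmt9Aux.mapDomain_comp', ← Stmt9Aux.mapDomain_comp']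
    congr 1
    funext h
    exact hres h
  have σιa : ∀ q : MonoidAlgebra R H,
      MonoidAlgebra.mapDomain σ (Stmt9Aux.iotA R H q) = Stmt9Aux.iotA R H (MonoidAlgebra.mapDomain σH q) := by
    intro q
    rw [Stmt9Aux.iotA, ← Stmt9Aux.mapDomain_comp', ← Stmt9Aux.mapDomain_comp']
    congr 1
    funext h
    exact hσa h
  refine ⟨Stmt9Aux.iot R H u₁ * Stmt9Aux.ep R H + Stmt9Aux.iot R H u₂ * Stmt9Aux.em R H,
          Stmt9Aux.iot R H p₁ * Stmt9Aux.ep R H + Stmt9Aux.iot R H p₂ * Stmt9Aux.em R H,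
          ?_, ?_, ?_, ?_⟩
  · obtain ⟨v₁, hv₁, hv₁'⟩ := isUnit_iff_exists.mp hu₁
    obtain ⟨v₂, hv₂, hv₂'⟩ := isUnit_iff_exists.mp hu₂
    refine isUnit_iff_exists.mpr
      ⟨Stmt9Aux.iot R H v₁ * Stmt9Aux.ep R H + Stmt9Aux.iot R H v₂ * Stmt9Aux.em R H, ?_, ?_⟩
    · rw [Stmt9Aux.key, hv₁, hv₂, Stmt9Aux.iot_one, one_mul, one_mul, Stmt9Aux.ep_add_em]
    · rw [Stmt9Aux.key, hv₁', hv₂', Stmt9Aux.iot_one, one_mul, one_mul, Stmt9Aux.ep_add_em]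
  · rw [Stmt9Aux.key, hpp₁, hpp₂]
  · rw [Stmt9Aux.iot_mul_ep, Stmt9Aux.iot_mul_em]
    have hsub : ∀ a b : MonoidAlgebra R (H × Multiplicative (ZMod 2)),
        MonoidAlgebra.mapDomain σ (a - b) = MonoidAlgebra.mapDomain σ a - MonoidAlgebra.mapDomain σ b :=
      fun a b => eq_sub_of_add_eq (by rw [← MonoidAlgebra.mapDomain_add, sub_add_cancel])
    rw [MonoidAlgebra.mapDomain_add, MonoidAlgebra.mapDomain_smul, MonoidAlgebra.mapDomain_smul,
      MonoidAlgebra.mapDomain_add, hsub, σι, σι, σιa, σιa, hsp₁, hsp₂]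
  · rw [hr, hx, hy, Stmt9Aux.iot_add, Stmt9Aux.iot_add, add_mul, add_mul]
    abel
end

section
/- Let R be a commutative unital ring with 2 invertible, G an SLC-group with commutator subgroup {1, s} and canonical involution *. Suppose there exist γ, τ ∈ RG such that (1 - γ²)·τ·(1 - s) = 0 and (z - 4⁻¹γ)·τ·(1 - s) ≠ 0 for all z ∈ R·Z(G) (the subring of RG spanned by central group elements). Then RG is not *-clean. -/
open Classical in
/-- The canonical involution of an SLC-group: central elements are fixed,
noncentral elements are multiplied by `s`. -/
noncomputable def canonicalInvolution {G : Type*} [Group G] (s : G) : G → G :=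
  fun g => if g ∈ Subgroup.center G then g else s * g

/-- a single supported at a central element commutes with everything. -/
lemma aux_single_comm {R G : Type*} [CommRing R] [Group G] {g : G}
    (hg : g ∈ Subgroup.center G) (r : R) (x : MonoidAlgebra R G) :
    MonoidAlgebra.single g r * x = x * MonoidAlgebra.single g r := by
  ext y
  rw [MonoidAlgebra.coeff_single_mul_apply, MonoidAlgebra.coeff_mul_single_apply, mul_comm]
  congr 1
  rw [Subgroup.mem_center_iff.mp (Subgroup.inv_mem _ hg) y]

/-- an element supported on central group elements is central. -/
lemma aux_comm {R G : Type*} [CommRing R] [Group G] (w : MonoidAlgebra R G)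
    (hw : ∀ g ∈ w.coeff.support, g ∈ Subgroup.center G) (x : MonoidAlgebra R G) :
    w * x = x * w := by
  conv_lhs => rw [← MonoidAlgebra.sum_coeff_single w]
  conv_rhs => rw [← MonoidAlgebra.sum_coeff_single w]
  rw [Finsupp.sum_mul, Finsupp.mul_sum]
  exact Finsupp.sum_congr fun g hg => aux_single_comm (hw g hg) _ x

lemma aux_smul_map {R G : Type*} [CommRing R] [Group G] (s : G) (x : MonoidAlgebra R G) :
    MonoidAlgebra.single s 1 * x = MonoidAlgebra.mapDomain (fun g => s * g) x := by
  ext y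
  rw [MonoidAlgebra.coeff_single_mul_apply, one_mul]
  show x.coeff (s⁻¹ * y) = Finsupp.mapDomain (fun g => s * g) x.coeff y
  have hinj : Function.Injective (fun g : G => s * g) := mul_right_injective s
  have hy : y = s * (s⁻¹ * y) := by group
  conv_rhs => rw [hy]
  exact (Finsupp.mapDomain_apply hinj x.coeff (s⁻¹ * y)).symm

theorem stmt12 {R G : Type*} [CommRing R] [Invertible (2 : R)] [Group G]
    (s : G) (hs : s ∈ Subgroup.center G) (hs2 : s ^ 2 = 1) (hs1 : s ≠ 1)
    (hG' : (commutator G : Set G) = {1, s})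
    (hSLC : Nonempty ((G ⧸ Subgroup.center G) ≃*
      Multiplicative (ZMod 2) × Multiplicative (ZMod 2)))
    (γ τ : MonoidAlgebra R G)
    (h1 : (1 - γ ^ 2) * τ * (1 - MonoidAlgebra.of R G s) = 0)
    (h2 : ∀ z : MonoidAlgebra R G, (∀ g ∈ z.coeff.support, g ∈ Subgroup.center G) →
      (z - (⅟2 * ⅟2 : R) • γ) * τ * (1 - MonoidAlgebra.of R G s) ≠ 0) :
    ¬ StarClean (R := MonoidAlgebra R G) (MonoidAlgebra.mapDomain (canonicalInvolution s)) := by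
  classical
  intro hclean
  set t : MonoidAlgebra R G := MonoidAlgebra.of R G s with ht
  set E : MonoidAlgebra R G := 1 - t with hE
  have htsingle : t = MonoidAlgebra.single s 1 := MonoidAlgebra.of_apply R G s
  have hhalf : (⅟2 : R) + ⅟2 = 1 := invOf_two_add_invOf_two
  have harith : (⅟2 * ⅟2 : R) * 2 = ⅟2 := by rw [mul_assoc, invOf_mul_self, mul_one]
  have hts : ∀ x : MonoidAlgebra R G, t * x = x * t := fun x => by
    rw [htsingle]; exact aux_single_comm hs 1 x
  have htt : t * t = 1 := by
    rw [htsingle, MonoidAlgebra.single_mul_single, one_mul, ← pow_two, hs2,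
      ← MonoidAlgebra.one_def]
  have hEcomm : ∀ x : MonoidAlgebra R G, E * x = x * E := fun x => by
    rw [hE, sub_mul, mul_sub, one_mul, mul_one, hts]
  have hEE : E * E = (2 : R) • E := by
    rw [hE, sub_mul, one_mul, mul_sub, mul_one, htt, two_smul]
    abel
  set v : MonoidAlgebra R G := τ * E with hv
  have hγv : γ ^ 2 * v = v := by
    have h1' : (1 - γ ^ 2) * v = 0 := by rw [hv, ← mul_assoc]; exact h1
    rw [sub_mul, one_mul, sub_eq_zero] at h1'
    exact h1'.symm
  have hEv : E * v = (2 : R) • v := by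
    rw [hv, hEcomm, mul_assoc, hEE, mul_smul_comm]
  have hEγv : E * (γ * v) = (2 : R) • (γ * v) := by
    rw [← mul_assoc, hEcomm, mul_assoc, hEv, mul_smul_comm]
  have hγγv : γ * (γ * v) = v := by rw [← mul_assoc, ← pow_two, hγv]
  obtain ⟨u, p, hu, hpp, hσp, ha⟩ := hclean ((⅟2 * ⅟2 : R) • ((1 + γ) * E))
  set c : MonoidAlgebra R G :=
    MonoidAlgebra.ofCoeff (Finsupp.filter (fun g => g ∈ Subgroup.center G) p.coeff) with hcdef
  set n : MonoidAlgebra R G :=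
    MonoidAlgebra.ofCoeff (Finsupp.filter (fun g => ¬ g ∈ Subgroup.center G) p.coeff) with hndef
  have hcn : c + n = p :=
    MonoidAlgebra.coeff_injective (by exact Finsupp.filter_pos_add_filter_neg p.coeff _)
  have hc_supp : ∀ g ∈ c.coeff.support, g ∈ Subgroup.center G := by
    intro g hg
    rw [hcdef, MonoidAlgebra.coeff_ofCoeff, Finsupp.support_filter, Finset.mem_filter] at hg
    exact hg.2
  have hσc : MonoidAlgebra.mapDomain (canonicalInvolution s) c = c := by
    have h' : Finsupp.mapDomain (canonicalInvolution s) c.coeff = Finsupp.mapDomain id c.coeff :=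
      Finsupp.mapDomain_congr fun g hg => by
        simp [canonicalInvolution, hc_supp g hg]
    exact congrArg MonoidAlgebra.ofCoeff (h'.trans Finsupp.mapDomain_id)
  have hσn : MonoidAlgebra.mapDomain (canonicalInvolution s) n = t * n := by
    have h' : Finsupp.mapDomain (canonicalInvolution s) n.coeff
        = Finsupp.mapDomain (fun g => s * g) n.coeff :=
      Finsupp.mapDomain_congr fun g hg => by
        rw [hndef, MonoidAlgebra.coeff_ofCoeff, Finsupp.support_filter, Finset.mem_filter] at hg
        simp [canonicalInvolution, hg.2]
    rw [htsingle, aux_smul_map]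
    exact congrArg MonoidAlgebra.ofCoeff h'
  rw [← hcn, MonoidAlgebra.mapDomain_add, hσc, hσn] at hσp
  have htn : t * n = n := add_left_cancel hσp
  have hEn : E * n = 0 := by rw [hE, sub_mul, one_mul, htn, sub_self]
  have hpE : p * E = c * E := by
    rw [← hcn, add_mul, ← hEcomm n, hEn, add_zero]
  have hccomm : ∀ x : MonoidAlgebra R G, c * x = x * c := fun x => aux_comm c hc_supp x
  have hpEx : ∀ x : MonoidAlgebra R G, p * (E * x) = c * (E * x) := fun x => by
    rw [← mul_assoc, hpE, mul_assoc]
  have hvE : v = E * τ := by rw [hv, hEcomm]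
  have hpv : p * v = c * v := by rw [hvE]; exact hpEx τ
  have hpuv : p * (u * v) = c * (u * v) := by
    have huvE : u * v = E * (u * τ) := by rw [hvE, ← mul_assoc, ← hEcomm, mul_assoc]
    rw [huvE]; exact hpEx (u * τ)
  have hav : ((⅟2 * ⅟2 : R) • ((1 + γ) * E)) * v = (⅟2 : R) • v + (⅟2 : R) • (γ * v) := by
    rw [smul_mul_assoc, mul_assoc, hEv, mul_smul_comm, smul_smul, harith,
      add_mul, one_mul, smul_add]
  have hA0γv : ((⅟2 * ⅟2 : R) • ((1 + γ) * E)) * (γ * v)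
      = (⅟2 : R) • (γ * v) + (⅟2 : R) • v := by
    rw [smul_mul_assoc, mul_assoc, hEγv, mul_smul_comm, smul_smul, harith,
      add_mul, one_mul, hγγv, smul_add]
  have ha2v : ((⅟2 * ⅟2 : R) • ((1 + γ) * E)) * (((⅟2 * ⅟2 : R) • ((1 + γ) * E)) * v)
      = ((⅟2 * ⅟2 : R) • ((1 + γ) * E)) * v := by
    rw [hav, mul_add, mul_smul_comm, mul_smul_comm, hav, hA0γv]
    match_scalars <;> linear_combination (⅟2 : R) * hhalf
  have hpuv' : p * (u * v) = u * (c * v) := by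
    rw [hpuv, ← mul_assoc, hccomm u, mul_assoc]
  have hpcv : p * (c * v) = c * v := by
    rw [← hpv, ← mul_assoc, hpp, hpv]
  have hexp : u * (u * v + (2 : R) • (c * v) - v) = 0 := by
    have h0 : (u + p) * ((u + p) * v) - (u + p) * v = 0 := by
      rw [← ha, ha2v, sub_self]
    simp only [add_mul, mul_add] at h0
    rw [hpv, hpuv', hpcv] at h0
    rw [mul_sub, mul_add, mul_smul_comm, two_smul]
    abel_nf at h0 ⊢
    exact h0
  have hkey : u * v + (2 : R) • (c * v) - v = 0 := by
    obtain ⟨U, hU⟩ := hu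
    have h' := congrArg (fun x => (↑U⁻¹ : MonoidAlgebra R G) * x) hexp
    simp only [mul_zero] at h'
    rwa [← hU, ← mul_assoc, Units.inv_mul, one_mul, hU] at h'
  have huv : u * v = (⅟2 : R) • v + (⅟2 : R) • (γ * v) - c * v := by
    have hu' : u = ((⅟2 * ⅟2 : R) • ((1 + γ) * E)) - p := eq_sub_of_add_eq ha.symm
    rw [hu', sub_mul, hav, hpv]
  have hkey2 : (⅟2 : R) • (γ * v) + c * v - (⅟2 : R) • v = 0 := by
    calc (⅟2 : R) • (γ * v) + c * v - (⅟2 : R) • v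
        = ((⅟2 : R) • v + (⅟2 : R) • (γ * v) - c * v) + (c * v + c * v)
            - ((⅟2 : R) • v + (⅟2 : R) • v) := by abel
      _ = ((⅟2 : R) • v + (⅟2 : R) • (γ * v) - c * v) + (2 : R) • (c * v) - v := by
          rw [two_smul, ← add_smul, hhalf, one_smul]
      _ = 0 := by rw [← huv]; exact hkey
  set z : MonoidAlgebra R G := (⅟2 * ⅟2 : R) • (1 : MonoidAlgebra R G) - (⅟2 : R) • c
    with hz
  have hzsupp : ∀ g ∈ z.coeff.support, g ∈ Subgroup.center G := by
    intro w hw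
    rw [hz, MonoidAlgebra.coeff_sub, MonoidAlgebra.coeff_smul, MonoidAlgebra.coeff_smul] at hw
    rcases Finset.mem_union.mp (Finsupp.support_sub hw) with h | h
    · have h1' := Finsupp.support_smul h
      rw [MonoidAlgebra.one_def, MonoidAlgebra.coeff_single] at h1'
      have := Finsupp.support_single_subset h1'
      rw [Finset.mem_singleton] at this
      rw [this]
      exact Subgroup.one_mem _
    · exact hc_supp w (Finsupp.support_smul h)
  refine h2 z hzsupp ?_
  rw [mul_assoc, ← hv, hz, sub_mul, sub_mul, smul_mul_assoc, smul_mul_assoc,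
    smul_mul_assoc, one_mul]
  have h' := congrArg (fun x => (⅟2 : R) • x) hkey2
  simp only [smul_add, smul_sub, smul_smul, smul_zero] at h'
  have h3 : (⅟2 * ⅟2 : R) • v - (⅟2 : R) • (c * v) - (⅟2 * ⅟2 : R) • (γ * v)
      = -((⅟2 * ⅟2 : R) • (γ * v) + (⅟2 : R) • (c * v) - (⅟2 * ⅟2 : R) • v) := by abel
  rw [h3, h', neg_zero]
end

section
/- Let R = ⊕_{i=1}^k R_i be a commutative unital ring with each R_i local and 2 ∈ U(R), and let * be the classical involution on RQ₈. If RQ₈ is clean and the equation X² + Y² + Z² + 1 = 0 has no solution in any R_i, then RQ₈ is *-clean. -/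
open Quaternion QuaternionGroup

section QuatStuff

variable (R : Type*) [CommRing R]

/-- The quaternion algebra (-1,-1) over R. -/
local notation "H" => QuaternionAlgebra R (-1 : R) (0 : R) (-1 : R)

def iQ : QuaternionAlgebra R (-1 : R) (0 : R) (-1 : R) := ⟨0, 1, 0, 0⟩
def jQ : QuaternionAlgebra R (-1 : R) (0 : R) (-1 : R) := ⟨0, 0, 1, 0⟩

lemma iQ_sq : iQ R * iQ R = -1 := by
  ext <;> simp [iQ, QuaternionAlgebra.re_mul, QuaternionAlgebra.imI_mul,
    QuaternionAlgebra.imJ_mul, QuaternionAlgebra.imK_mul]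

lemma jQ_sq : jQ R * jQ R = -1 := by
  ext <;> simp [jQ, QuaternionAlgebra.re_mul, QuaternionAlgebra.imI_mul,
    QuaternionAlgebra.imJ_mul, QuaternionAlgebra.imK_mul]

lemma iQ_pow4 : iQ R ^ 4 = 1 := by
  have h : iQ R ^ 2 = -1 := by rw [sq, iQ_sq]
  rw [show (4 : ℕ) = 2 * 2 from rfl, pow_mul, h, neg_one_sq]

lemma iQ_mul_jQ : iQ R * jQ R = jQ R * iQ R ^ 3 := by
  ext <;> simp [iQ, jQ, pow_succ, QuaternionAlgebra.re_mul, QuaternionAlgebra.imI_mul,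
    QuaternionAlgebra.imJ_mul, QuaternionAlgebra.imK_mul]

lemma iQ_pow_mod (m : ℕ) : iQ R ^ m = iQ R ^ (m % 4) := by
  conv_lhs => rw [← Nat.div_add_mod m 4, pow_add, pow_mul, iQ_pow4, one_pow, one_mul]

lemma iQ_pow_congr {m n : ℕ} (h : (m : ZMod 4) = n) : iQ R ^ m = iQ R ^ n := by
  rw [iQ_pow_mod, iQ_pow_mod R n]
  congr 1
  exact (ZMod.natCast_eq_natCast_iff m n 4).1 h

lemma iQ_pow_mul_jQ (m : ℕ) : iQ R ^ m * jQ R = jQ R * iQ R ^ (3 * m) := by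
  induction m with
  | zero => simp
  | succ k ih =>
      rw [pow_succ, mul_assoc, iQ_mul_jQ, ← mul_assoc, ih, mul_assoc, ← pow_add]
      ring_nf

/-- the underlying function of the monoid hom Q8 → H. -/
def psifun : QuaternionGroup 2 → QuaternionAlgebra R (-1 : R) (0 : R) (-1 : R)
  | .a i => iQ R ^ i.val
  | .xa i => jQ R * iQ R ^ i.val

lemma zmod4cast (x : ZMod (2 * 2)) : ((x.val : ℕ) : ZMod 4) = x := by
  have : ((x.val : ℕ) : ZMod (2*2)) = x := by
    simp [ZMod.natCast_val, ZMod.cast_id]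
  exact this

def psi : QuaternionGroup 2 →* QuaternionAlgebra R (-1 : R) (0 : R) (-1 : R) where
  toFun := psifun R
  map_one' := by
    rw [one_def]
    show iQ R ^ (0 : ZMod (2*2)).val = 1
    simp
  map_mul' := by
    rintro (i | i) (j | j)
    · show psifun R (.a (i + j)) = iQ R ^ i.val * iQ R ^ j.val
      show iQ R ^ (i + j).val = _
      rw [← pow_add]
      refine iQ_pow_congr R ?_
      push_cast [zmod4cast]
      ring
    · show psifun R (.xa (j - i)) = iQ R ^ i.val * (jQ R * iQ R ^ j.val)
      show jQ R * iQ R ^ (j - i).val = _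
      rw [← mul_assoc, iQ_pow_mul_jQ, mul_assoc, ← pow_add]
      congr 1
      refine iQ_pow_congr R ?_
      push_cast [zmod4cast]
      rw [show (3 : ZMod 4) = -1 by decide]
      ring
    · show psifun R (.xa (i + j)) = jQ R * iQ R ^ i.val * iQ R ^ j.val
      show jQ R * iQ R ^ (i + j).val = _
      rw [mul_assoc, ← pow_add]
      congr 1
      refine iQ_pow_congr R ?_
      push_cast [zmod4cast]
      ring
    · show psifun R (.a (((2:ℕ) : ZMod (2*2)) + j - i)) =
        jQ R * iQ R ^ i.val * (jQ R * iQ R ^ j.val)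
      show iQ R ^ ((((2:ℕ) : ZMod (2*2)) + j - i)).val = _
      rw [mul_assoc, ← mul_assoc (iQ R ^ i.val), iQ_pow_mul_jQ, ← mul_assoc, ← mul_assoc,
        jQ_sq, mul_assoc, ← pow_add]
      have h2 : (-1 : QuaternionAlgebra R (-1 : R) (0 : R) (-1 : R)) = iQ R ^ 2 := by
        rw [pow_two, iQ_sq]
      rw [h2, ← pow_add]
      refine iQ_pow_congr R ?_
      push_cast [zmod4cast]
      rw [show (3 : ZMod 4) = -1 by decide]
      ring

lemma zmod4_cases (x : ZMod (2 * 2)) : x = 0 ∨ x = 1 ∨ x = 2 ∨ x = 3 := by revert x; decide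

lemma val0 : ZMod.val (0 : ZMod (2 * 2)) = 0 := rfl
lemma val1 : ZMod.val (1 : ZMod (2 * 2)) = 1 := rfl
lemma val2 : ZMod.val (2 : ZMod (2 * 2)) = 2 := rfl
lemma val3 : ZMod.val (3 : ZMod (2 * 2)) = 3 := rfl

lemma psi_imI (g : QuaternionGroup 2) :
    (psi R g).imI = (if g = .a 1 then (1 : R) else 0) + (if g = .a 3 then (-1 : R) else 0) := by
  rcases g with i | i <;> rcases zmod4_cases i with h | h | h | h <;> subst h <;>
    simp +decide [-a_zero, psi, psifun, iQ, jQ, val0, val1, val2, val3, pow_succ,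
      QuaternionAlgebra.re_mul, QuaternionAlgebra.imI_mul,
      QuaternionAlgebra.imJ_mul, QuaternionAlgebra.imK_mul]

lemma psi_imJ (g : QuaternionGroup 2) :
    (psi R g).imJ = (if g = .xa 0 then (1 : R) else 0) - (if g = .xa 2 then (1 : R) else 0) := by
  rcases g with i | i <;> rcases zmod4_cases i with h | h | h | h <;> subst h <;>
    simp +decide [-a_zero, psi, psifun, iQ, jQ, val0, val1, val2, val3, pow_succ,
      QuaternionAlgebra.re_mul, QuaternionAlgebra.imI_mul,
      QuaternionAlgebra.imJ_mul, QuaternionAlgebra.imK_mul]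

lemma psi_imK (g : QuaternionGroup 2) :
    (psi R g).imK = (if g = .xa 3 then (1 : R) else 0) - (if g = .xa 1 then (1 : R) else 0) := by
  rcases g with i | i <;> rcases zmod4_cases i with h | h | h | h <;> subst h <;>
    simp +decide [-a_zero, psi, psifun, iQ, jQ, val0, val1, val2, val3, pow_succ,
      QuaternionAlgebra.re_mul, QuaternionAlgebra.imI_mul,
      QuaternionAlgebra.imJ_mul, QuaternionAlgebra.imK_mul]

lemma psi_imI' (g : QuaternionGroup 2) :
    (psi R g).imI = (if g = .a 1 then (1 : R) else 0) - (if g = .a 3 then (1 : R) else 0) := by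
  rw [psi_imI]; split <;> split <;> simp

lemma lift_coeff (e : MonoidAlgebra R (QuaternionGroup 2)) (g₁ g₂ : QuaternionGroup 2)
    (f : QuaternionAlgebra R (-1 : R) (0 : R) (-1 : R) →ₗ[R] R)
    (hf : ∀ g, f (psi R g) = (if g = g₁ then (1 : R) else 0) - (if g = g₂ then (1 : R) else 0)) :
    f ((MonoidAlgebra.lift R
        (QuaternionAlgebra R (-1 : R) (0 : R) (-1 : R)) (QuaternionGroup 2) (psi R)) e) = e.coeff g₁ - e.coeff g₂ := by
  classical
  rw [MonoidAlgebra.lift_apply, map_finsuppSum]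
  have : (fun (g : QuaternionGroup 2) (r : R) => f (r • psi R g)) =
      fun g r => (if g = g₁ then r else 0) - (if g = g₂ then r else 0) := by
    funext g r
    rw [map_smul, smul_eq_mul, hf]
    split <;> split <;> ring
  rw [this, Finsupp.sum_sub, Finsupp.sum_ite_self_eq', Finsupp.sum_ite_self_eq']

end QuatStuff

lemma local_scalar {R : Type*} [CommRing R] [IsLocalRing R]
    (hsol : ¬ ∃ x y z : R, x ^ 2 + y ^ 2 + z ^ 2 + 1 = 0)
    {a b c d : R} (hb : 2 * (a * b) = b) (hc : 2 * (a * c) = c) (hd : 2 * (a * d) = d)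
    (ha : a * a - b * b - c * c - d * d = a) : b = 0 ∧ c = 0 ∧ d = 0 := by
  have hb0 : b * (2 * a - 1) = 0 := by linear_combination hb
  have hc0 : c * (2 * a - 1) = 0 := by linear_combination hc
  have hd0 : d * (2 * a - 1) = 0 := by linear_combination hd
  by_cases hu : IsUnit (2 * a - 1)
  · exact ⟨(hu.mul_left_eq_zero).1 hb0, (hu.mul_left_eq_zero).1 hc0,
      (hu.mul_left_eq_zero).1 hd0⟩
  · exfalso
    have hm : 2 * a - 1 ∈ IsLocalRing.maximalIdeal R :=
      (IsLocalRing.mem_maximalIdeal _).2 (mem_nonunits_iff.2 hu)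
    have notone : (1 : R) ∉ IsLocalRing.maximalIdeal R := fun h =>
      (mem_nonunits_iff.1 ((IsLocalRing.mem_maximalIdeal _).1 h)) isUnit_one
    have hA : IsUnit a := by
      by_contra h
      have h1 : a ∈ IsLocalRing.maximalIdeal R :=
        (IsLocalRing.mem_maximalIdeal _).2 (mem_nonunits_iff.2 h)
      have h2 := Ideal.sub_mem _ (Ideal.add_mem _ h1 h1) hm
      have e : a + a - (2 * a - 1) = 1 := by ring
      rw [e] at h2
      exact notone h2
    have hA1 : IsUnit (a - 1) := by
      by_contra h
      have h1 : a - 1 ∈ IsLocalRing.maximalIdeal R :=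
        (IsLocalRing.mem_maximalIdeal _).2 (mem_nonunits_iff.2 h)
      have h2 := Ideal.sub_mem _ hm (Ideal.mul_mem_left _ 2 h1)
      have e : (2 * a - 1) - 2 * (a - 1) = 1 := by ring
      rw [e] at h2
      exact notone h2
    have key : (a * (a - 1)) * (2 * a - 1) = 0 := by
      linear_combination b * hb0 + c * hc0 + d * hd0 + (2 * a - 1) * ha
    have h0 : 2 * a - 1 = 0 := ((hA.mul hA1).mul_right_eq_zero).1 key
    exact hsol ⟨2 * b, 2 * c, 2 * d, by linear_combination (-4) * ha + (2 * a - 1) * h0⟩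

/-- A ring is clean if every element is a unit plus an idempotent. -/
def IsCleanRing (R : Type*) [Ring R] : Prop :=
  ∀ a : R, ∃ u e : R, IsUnit u ∧ e * e = e ∧ a = u + e

theorem stmt15 {ι : Type*} [Fintype ι] (Rι : ι → Type*) [∀ i, CommRing (Rι i)]
    [∀ i, IsLocalRing (Rι i)] [Invertible (2 : ∀ i, Rι i)]
    (hclean : IsCleanRing (MonoidAlgebra (∀ i, Rι i) (QuaternionGroup 2)))
    (hsol : ∀ i, ¬ ∃ x y z : Rι i, x ^ 2 + y ^ 2 + z ^ 2 + 1 = 0) :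
    StarClean (R := MonoidAlgebra (∀ i, Rι i) (QuaternionGroup 2))
      (MonoidAlgebra.mapDomain (fun g : QuaternionGroup 2 => g⁻¹)) := by
  intro x
  obtain ⟨u, e, hu, he, hx⟩ := hclean x
  refine ⟨u, e, hu, he, ?_, hx⟩
  set Rp := ∀ i, Rι i with hRp
  let φ := MonoidAlgebra.lift Rp
    (QuaternionAlgebra Rp (-1 : Rp) (0 : Rp) (-1 : Rp)) (QuaternionGroup 2) (psi Rp)
  set q := φ e with hqdef
  have hq : q * q = q := by rw [hqdef, ← map_mul, he]
  have himI : q.imI = e.coeff (.a 1) - e.coeff (.a 3) :=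
    lift_coeff Rp e _ _ (QuaternionAlgebra.imIₗ _ _ _) (psi_imI' Rp)
  have himJ : q.imJ = e.coeff (.xa 0) - e.coeff (.xa 2) :=
    lift_coeff Rp e _ _ (QuaternionAlgebra.imJₗ _ _ _) (psi_imJ Rp)
  have himK : q.imK = e.coeff (.xa 3) - e.coeff (.xa 1) :=
    lift_coeff Rp e _ _ (QuaternionAlgebra.imKₗ _ _ _) (psi_imK Rp)
  have e1 : 2 * (q.re * q.imI) = q.imI := by
    have h := congrArg QuaternionAlgebra.imI hq
    rw [QuaternionAlgebra.imI_mul] at h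
    linear_combination h
  have e2 : 2 * (q.re * q.imJ) = q.imJ := by
    have h := congrArg QuaternionAlgebra.imJ hq
    rw [QuaternionAlgebra.imJ_mul] at h
    linear_combination h
  have e3 : 2 * (q.re * q.imK) = q.imK := by
    have h := congrArg QuaternionAlgebra.imK hq
    rw [QuaternionAlgebra.imK_mul] at h
    linear_combination h
  have e4 : q.re * q.re - q.imI * q.imI - q.imJ * q.imJ - q.imK * q.imK = q.re := by
    have h := congrArg QuaternionAlgebra.re hq
    rw [QuaternionAlgebra.re_mul] at h
    linear_combination h
  have hzero : ∀ i : ι, q.imI i = 0 ∧ q.imJ i = 0 ∧ q.imK i = 0 := by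
    intro i
    have b1 := congrFun e1 i
    have b2 := congrFun e2 i
    have b3 := congrFun e3 i
    have b4 := congrFun e4 i
    simp only [Rp, Pi.mul_apply, Pi.sub_apply, Pi.ofNat_apply] at b1 b2 b3 b4
    exact local_scalar (hsol i) b1 b2 b3 b4
  have hI : e.coeff (.a 1) = e.coeff (.a 3) := by
    have hz : q.imI = 0 := funext fun i => (hzero i).1
    rw [hz] at himI
    exact sub_eq_zero.1 himI.symm
  have hJ : e.coeff (.xa 0) = e.coeff (.xa 2) := by
    have hz : q.imJ = 0 := funext fun i => (hzero i).2.1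
    rw [hz] at himJ
    exact sub_eq_zero.1 himJ.symm
  have hK : e.coeff (.xa 3) = e.coeff (.xa 1) := by
    have hz : q.imK = 0 := funext fun i => (hzero i).2.2
    rw [hz] at himK
    exact sub_eq_zero.1 himK.symm
  have hinv : ∀ g : QuaternionGroup 2, e.coeff g⁻¹ = e.coeff g := by
    rintro (i | i) <;> rcases zmod4_cases i with h | h | h | h <;> subst h
    · rw [show (QuaternionGroup.a (0 : ZMod (2*2)))⁻¹ = .a 0 from by decide]
    · rw [show (QuaternionGroup.a (1 : ZMod (2*2)))⁻¹ = .a 3 from by decide]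
      exact hI.symm
    · rw [show (QuaternionGroup.a (2 : ZMod (2*2)))⁻¹ = .a 2 from by decide]
    · rw [show (QuaternionGroup.a (3 : ZMod (2*2)))⁻¹ = .a 1 from by decide]
      exact hI
    · rw [show (QuaternionGroup.xa (0 : ZMod (2*2)))⁻¹ = .xa 2 from by decide]
      exact hJ.symm
    · rw [show (QuaternionGroup.xa (1 : ZMod (2*2)))⁻¹ = .xa 3 from by decide]
      exact hK
    · rw [show (QuaternionGroup.xa (2 : ZMod (2*2)))⁻¹ = .xa 0 from by decide]
      exact hJ
    · rw [show (QuaternionGroup.xa (3 : ZMod (2*2)))⁻¹ = .xa 1 from by decide]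
      exact hK.symm
  refine MonoidAlgebra.ext (Finsupp.ext fun g => ?_)
  have hmd := Finsupp.mapDomain_apply
    (f := fun g : QuaternionGroup 2 => g⁻¹) (fun x y h => inv_injective h) e.coeff g⁻¹
  rw [inv_inv] at hmd
  rw [MonoidAlgebra.coeff_mapDomain, hmd, hinv]
end

section
/- For G = Q₈ × A with A a finite abelian group and * the canonical involution, the complex group algebra ℂG is not *-clean; more generally, for any SLC-group G with canonical involution, ℂG is not *-clean. -/
noncomputable instance : RootableBy ℂˣ ℕ :=
  rootableByOfPowLeftSurj _ _ (fun {n} hn u => by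
    obtain ⟨w, hw⟩ := IsAlgClosed.exists_pow_nat_eq (u : ℂ) (Nat.pos_of_ne_zero hn)
    have hw0 : w ≠ 0 := by
      intro h; rw [h, zero_pow hn] at hw; exact u.ne_zero hw.symm
    exact ⟨Units.mk0 w hw0, Units.ext (by push_cast; exact hw)⟩)

noncomputable instance : RootableBy ℂˣ ℤ := Group.rootableByIntOfRootableByNat ℂˣ

noncomputable instance : DivisibleBy (Additive ℂˣ) ℤ where
  div a n := Additive.ofMul (RootableBy.root a.toMul n)
  div_zero a := congrArg Additive.ofMul (RootableBy.root_zero _)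
  div_cancel {n} a hn := by
    show n • Additive.ofMul (RootableBy.root a.toMul n) = a
    rw [← ofMul_zpow, RootableBy.root_cancel _ hn, ofMul_toMul]

universe u

lemma exists_character {Z : Type u} [CommGroup Z] (z : Z) (h2 : z ^ 2 = 1) (h1 : z ≠ 1) :
    ∃ l : Z →* ℂˣ, l z = -1 := by
  classical
  set H := Subgroup.zpowers z with hH
  have hmem : ∀ w : H, (w : Z) = 1 ∨ (w : Z) = z := by
    rintro ⟨w, k, rfl⟩
    have h2z : z ^ (2 : ℤ) = 1 := by rw [zpow_two, ← pow_two]; exact h2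
    rcases Int.even_or_odd k with ⟨m, hm⟩ | ⟨m, hm⟩
    · left
      show z ^ k = 1
      rw [hm, ← two_mul, zpow_mul, h2z, one_zpow]
    · right
      show z ^ k = z
      rw [hm, zpow_add, zpow_mul, h2z, one_zpow, one_mul, zpow_one]
  have hchi : ∀ w₁ w₂ : H,
      (if ((w₁ * w₂ : H) : Z) = z then (-1 : ℂˣ) else 1)
        = (if (w₁ : Z) = z then (-1:ℂˣ) else 1) * (if (w₂ : Z) = z then (-1:ℂˣ) else 1) := by
    intro w₁ w₂
    have h12 : ((w₁ * w₂ : H) : Z) = (w₁ : Z) * (w₂ : Z) := rfl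
    rcases hmem w₁ with e1 | e1 <;> rcases hmem w₂ with e2 | e2 <;>
      simp [h12, e1, e2, h1, Ne.symm h1, pow_two] at * <;>
      simp [show z * z = 1 from by rw [← pow_two]; exact h2, h1, Ne.symm h1]
  let χ : H →* ℂˣ :=
    { toFun := fun w => if (w : Z) = z then (-1 : ℂˣ) else 1
      map_one' := by simp [Ne.symm h1]
      map_mul' := fun w₁ w₂ => hchi w₁ w₂ }
  -- extend χ to Z using injectivity of the divisible group ℂˣ
  have inj : Module.Injective ℤ (ULift.{u} (Additive ℂˣ)) :=
    Module.ulift_injective_of_injective _ (Module.Baer.injective (Module.Baer.of_divisible _))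
  let fι : Additive H →+ Additive Z := MonoidHom.toAdditive H.subtype
  have hfι : Function.Injective fι := by
    intro a b hab
    have h2' : (a.toMul : Z) = (b.toMul : Z) := congrArg (fun t => Additive.toMul t) hab
    have h3 : (a.toMul : ↥H) = b.toMul := Subtype.ext h2'
    exact congrArg Additive.ofMul h3
  let gχ : Additive H →ₗ[ℤ] ULift.{u} (Additive ℂˣ) :=
    (ULift.moduleEquiv.symm.toLinearMap) ∘ₗ (MonoidHom.toAdditive χ).toIntLinearMap
  obtain ⟨h, hh⟩ := inj.out fι.toIntLinearMap hfι gχ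
  refine ⟨{ toFun := fun w => ((h (Additive.ofMul w)).down).toMul
            map_one' := ?_
            map_mul' := ?_ }, ?_⟩
  · show ((h (Additive.ofMul (1 : Z))).down).toMul = 1
    rw [show Additive.ofMul (1 : Z) = 0 from rfl, map_zero]; rfl
  · intro w₁ w₂
    show ((h (Additive.ofMul (w₁ * w₂))).down).toMul
      = ((h (Additive.ofMul w₁)).down).toMul * ((h (Additive.ofMul w₂)).down).toMul
    rw [show Additive.ofMul (w₁ * w₂) = Additive.ofMul w₁ + Additive.ofMul w₂ from rfl, map_add]
    rfl

  · have hz : (⟨z, Subgroup.mem_zpowers z⟩ : H) = z := rfl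
    have := hh (Additive.ofMul (⟨z, Subgroup.mem_zpowers z⟩ : H))
    simp only [gχ] at this
    have hres : h (Additive.ofMul (z : Z)) =
        ULift.up (Additive.ofMul (χ ⟨z, Subgroup.mem_zpowers z⟩)) := this
    show ((h (Additive.ofMul z)).down).toMul = -1
    rw [hres]
    show χ ⟨z, Subgroup.mem_zpowers z⟩ = -1
    simp [χ]



namespace SLC17

open Matrix MonoidAlgebra

abbrev Z2 : Type := Multiplicative (ZMod 2) × Multiplicative (ZMod 2)

def εe (v : Multiplicative (ZMod 2)) : ℕ := v.toAdd.val

@[simp] lemma εe_one : εe 1 = 0 := rfl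
@[simp] lemma εe_g : εe (Multiplicative.ofAdd 1) = 1 := rfl

lemma cases2 (v : Multiplicative (ZMod 2)) : v = 1 ∨ v = Multiplicative.ofAdd (1 : ZMod 2) := by
  revert v; decide

lemma ofAdd_pow (n : ℕ) :
    (Multiplicative.ofAdd (1 : ZMod 2)) ^ n = Multiplicative.ofAdd ((n : ZMod 2)) := by
  rw [← ofAdd_nsmul]
  congr 1
  simp [nsmul_eq_mul]

lemma ofAdd_pow_εe (v : Multiplicative (ZMod 2)) :
    (Multiplicative.ofAdd (1 : ZMod 2)) ^ (εe v) = v := by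
  rw [ofAdd_pow, εe, ZMod.natCast_val, ZMod.cast_id]
  rfl

lemma c_w {G : Type u} [Group G] (c : G →* Z2) (x y : G)
    (hcx : c x = (Multiplicative.ofAdd 1, 1)) (hcy : c y = (1, Multiplicative.ofAdd 1))
    (v : Z2) : c (x ^ εe v.1 * y ^ εe v.2) = v := by
  obtain ⟨v1, v2⟩ := v
  rw [_root_.map_mul, map_pow, map_pow, hcx, hcy, Prod.pow_mk, Prod.pow_mk, Prod.mk_mul_mk,
    one_pow, one_pow, mul_one, one_mul, ofAdd_pow_εe, ofAdd_pow_εe]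

structure Setup (G : Type u) [Group G] where
  s : G
  x : G
  y : G
  l : Subgroup.center G →* ℂˣ
  c : G →* Z2
  hker : ∀ g : G, c g = 1 ↔ g ∈ Subgroup.center G
  hcx : c x = (Multiplicative.ofAdd 1, 1)
  hcy : c y = (1, Multiplicative.ofAdd 1)
  hs : s ∈ Subgroup.center G
  hyx : y * x = s * (x * y)
  hls : (l ⟨s, hs⟩ : ℂ) = -1
  α : ℂ
  hx2 : x ^ 2 ∈ Subgroup.center G
  hy2 : y ^ 2 ∈ Subgroup.center G
  hu : (l ⟨y ^ 2, hy2⟩ : ℂ) = α ^ 2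

namespace Setup

variable {G : Type u} [Group G] (S : Setup G)

noncomputable def t : ℂ := (S.l ⟨S.x ^ 2, S.hx2⟩ : ℂ)

noncomputable def Xm : Matrix (Fin 2) (Fin 2) ℂ := !![0, S.t; 1, 0]
noncomputable def Ym : Matrix (Fin 2) (Fin 2) ℂ := !![S.α, 0; 0, -S.α]

def m (v : Z2) : G := S.x ^ εe v.1 * S.y ^ εe v.2

noncomputable def Mv (v : Z2) : Matrix (Fin 2) (Fin 2) ℂ := S.Xm ^ εe v.1 * S.Ym ^ εe v.2

lemma c_m (v : Z2) : S.c (S.m v) = v := c_w S.c S.x S.y S.hcx S.hcy v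

lemma m_mem (g : G) : g * (S.m (S.c g))⁻¹ ∈ Subgroup.center G := by
  rw [← S.hker, _root_.map_mul, map_inv, S.c_m, mul_inv_cancel]

noncomputable def zg (g : G) : Subgroup.center G := ⟨g * (S.m (S.c g))⁻¹, S.m_mem g⟩

lemma γ_mem (v w : Z2) : S.m v * S.m w * (S.m (v * w))⁻¹ ∈ Subgroup.center G := by
  rw [← S.hker, _root_.map_mul, _root_.map_mul, map_inv, S.c_m, S.c_m, S.c_m, mul_inv_cancel]

noncomputable def γ (v w : Z2) : Subgroup.center G := ⟨S.m v * S.m w * (S.m (v * w))⁻¹, S.γ_mem v w⟩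

noncomputable def fmat (g : G) : Matrix (Fin 2) (Fin 2) ℂ := (S.l (S.zg g) : ℂ) • S.Mv (S.c g)

lemma hsc (g : G) : g * S.s = S.s * g := (Subgroup.mem_center_iff.1 S.hs g)

lemma hy2c (g : G) : g * S.y ^ 2 = S.y ^ 2 * g := (Subgroup.mem_center_iff.1 S.hy2 g)

lemma XX : S.Xm * S.Xm = S.t • (1 : Matrix (Fin 2) (Fin 2) ℂ) := by
  ext i j
  fin_cases i <;> fin_cases j <;>
    simp [Xm, Matrix.mul_apply, Fin.sum_univ_two, Matrix.one_apply] <;> ring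

lemma YY : S.Ym * S.Ym = (S.α ^ 2) • (1 : Matrix (Fin 2) (Fin 2) ℂ) := by
  ext i j
  fin_cases i <;> fin_cases j <;>
    simp [Ym, Matrix.mul_apply, Fin.sum_univ_two, Matrix.one_apply, pow_two] <;> ring

lemma YX : S.Ym * S.Xm = -(S.Xm * S.Ym) := by
  ext i j
  fin_cases i <;> fin_cases j <;>
    simp [Xm, Ym, Matrix.mul_apply, Fin.sum_univ_two] <;> ring

lemma XX' (A : Matrix (Fin 2) (Fin 2) ℂ) : S.Xm * (S.Xm * A) = S.t • A := by
  rw [← mul_assoc, S.XX, smul_mul_assoc, one_mul]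

lemma YY' (A : Matrix (Fin 2) (Fin 2) ℂ) : S.Ym * (S.Ym * A) = (S.α ^ 2) • A := by
  rw [← mul_assoc, S.YY, smul_mul_assoc, one_mul]

lemma YX' (A : Matrix (Fin 2) (Fin 2) ℂ) : S.Ym * (S.Xm * A) = -(S.Xm * (S.Ym * A)) := by
  rw [← mul_assoc, S.YX, ← mul_assoc, neg_mul]

@[simp] lemma gg_one : (Multiplicative.ofAdd (1 : ZMod 2)) * (Multiplicative.ofAdd 1) = 1 := by
  decide

@[simp] lemma Mv_11 : S.Mv (1, 1) = 1 := by
  simp [Mv, show εe (1 : Multiplicative (ZMod 2)) = 0 from rfl]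

@[simp] lemma Mv_x : S.Mv (Multiplicative.ofAdd (1 : ZMod 2), 1) = S.Xm := by simp [Mv]

@[simp] lemma Mv_y : S.Mv (1, Multiplicative.ofAdd (1 : ZMod 2)) = S.Ym := by simp [Mv]

@[simp] lemma Mv_xy : S.Mv (Multiplicative.ofAdd (1 : ZMod 2), Multiplicative.ofAdd (1 : ZMod 2))
    = S.Xm * S.Ym := by simp [Mv]

@[simp] lemma Mv_one : S.Mv 1 = 1 := S.Mv_11

@[simp] lemma m_11 : S.m (1, 1) = 1 := by simp [m]

@[simp] lemma m_one : S.m 1 = 1 := S.m_11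

@[simp] lemma m_x : S.m (Multiplicative.ofAdd (1 : ZMod 2), 1) = S.x := by simp [m]

@[simp] lemma m_y : S.m (1, Multiplicative.ofAdd (1 : ZMod 2)) = S.y := by simp [m]

@[simp] lemma m_xy : S.m (Multiplicative.ofAdd (1 : ZMod 2), Multiplicative.ofAdd (1 : ZMod 2))
    = S.x * S.y := by simp [m]

lemma l_x2 : (S.l ⟨S.x ^ 2, S.hx2⟩ : ℂ) = S.t := rfl

lemma γ_eq (v w : Z2) (z : Subgroup.center G)
    (h : S.m v * S.m w * (S.m (v * w))⁻¹ = (z : G)) : S.γ v w = z := Subtype.ext h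

lemma Mv_mul (v w : Z2) : S.Mv v * S.Mv w = (S.l (S.γ v w) : ℂ) • S.Mv (v * w) := by
  obtain ⟨a, b⟩ := v
  obtain ⟨c, d⟩ := w
  rcases cases2 a with rfl | rfl <;> rcases cases2 b with rfl | rfl <;>
    rcases cases2 c with rfl | rfl <;> rcases cases2 d with rfl | rfl
  -- (1,1)(1,1)
  · rw [S.γ_eq _ _ 1 (by simp [Prod.mk_mul_mk, mul_assoc])]
    simp [Prod.mk_mul_mk]
  -- (1,1)(1,g)
  · rw [S.γ_eq _ _ 1 (by simp [Prod.mk_mul_mk, mul_assoc])]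
    simp [Prod.mk_mul_mk]
  -- (1,1)(g,1)
  · rw [S.γ_eq _ _ 1 (by simp [Prod.mk_mul_mk, mul_assoc])]
    simp [Prod.mk_mul_mk]
  -- (1,1)(g,g)
  · rw [S.γ_eq _ _ 1 (by simp [Prod.mk_mul_mk, mul_assoc])]
    simp [Prod.mk_mul_mk]
  -- (1,g)(1,1)
  · rw [S.γ_eq _ _ 1 (by simp [Prod.mk_mul_mk, mul_assoc])]
    simp [Prod.mk_mul_mk]
  -- (1,g)(1,g) : y*y = y²
  · rw [S.γ_eq _ _ ⟨S.y ^ 2, S.hy2⟩ (by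
      simp only [Prod.mk_mul_mk, one_mul, mul_one, gg_one, m_11, m_one, m_x, m_y, m_xy]
      simp [pow_two, mul_assoc])]
    simp only [Prod.mk_mul_mk, one_mul, mul_one, gg_one, Mv_11, Mv_one, Mv_x, Mv_y, Mv_xy]
    rw [S.hu, S.YY]
  -- (1,g)(g,1) : y*x = s*(x*y)
  · rw [S.γ_eq _ _ ⟨S.s, S.hs⟩ (by
      simp only [Prod.mk_mul_mk, one_mul, mul_one, gg_one, m_11, m_one, m_x, m_y, m_xy]
      rw [S.hyx]; group)]
    simp only [Prod.mk_mul_mk, one_mul, mul_one, gg_one, Mv_11, Mv_one, Mv_x, Mv_y, Mv_xy]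
    rw [S.hls, S.YX, neg_one_smul]
  -- (1,g)(g,g) : y*(x*y)*x⁻¹ = s*y²
  · rw [S.γ_eq _ _ (⟨S.s, S.hs⟩ * ⟨S.y ^ 2, S.hy2⟩) (by
      simp only [Prod.mk_mul_mk, one_mul, mul_one, gg_one, m_11, m_one, m_x, m_y, m_xy]
      show S.y * (S.x * S.y) * S.x⁻¹ = S.s * S.y ^ 2
      calc S.y * (S.x * S.y) * S.x⁻¹ = (S.y * S.x) * (S.y * S.x⁻¹) := by simp [pow_two, mul_assoc]
        _ = S.s * (S.x * S.y) * (S.y * S.x⁻¹) := by rw [S.hyx]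
        _ = S.s * ((S.x * S.y ^ 2) * S.x⁻¹) := by simp [pow_two, mul_assoc]
        _ = S.s * ((S.y ^ 2 * S.x) * S.x⁻¹) := by rw [S.hy2c]
        _ = S.s * S.y ^ 2 := by simp [pow_two, mul_assoc])]
    simp only [Prod.mk_mul_mk, one_mul, mul_one, gg_one, Mv_11, Mv_one, Mv_x, Mv_y, Mv_xy]
    rw [_root_.map_mul, Units.val_mul, S.hls, S.hu, S.YX', S.YY, mul_smul_comm, mul_one]
    module
  -- (g,1)(1,1)
  · rw [S.γ_eq _ _ 1 (by simp [Prod.mk_mul_mk, mul_assoc])]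
    simp [Prod.mk_mul_mk]
  -- (g,1)(1,g) : x*y*(x*y)⁻¹ = 1
  · rw [S.γ_eq _ _ 1 (by
      simp only [Prod.mk_mul_mk, one_mul, mul_one, gg_one, m_11, m_one, m_x, m_y, m_xy]
      simp [pow_two, mul_assoc])]
    simp only [Prod.mk_mul_mk, one_mul, mul_one, gg_one, Mv_11, Mv_one, Mv_x, Mv_y, Mv_xy]
    simp
  -- (g,1)(g,1) : x*x = x²
  · rw [S.γ_eq _ _ ⟨S.x ^ 2, S.hx2⟩ (by
      simp only [Prod.mk_mul_mk, one_mul, mul_one, gg_one, m_11, m_one, m_x, m_y, m_xy]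
      simp [pow_two, mul_assoc])]
    simp only [Prod.mk_mul_mk, one_mul, mul_one, gg_one, Mv_11, Mv_one, Mv_x, Mv_y, Mv_xy]
    rw [S.l_x2, S.XX]
  -- (g,1)(g,g) : x*(x*y)*y⁻¹ = x²
  · rw [S.γ_eq _ _ ⟨S.x ^ 2, S.hx2⟩ (by
      simp only [Prod.mk_mul_mk, one_mul, mul_one, gg_one, m_11, m_one, m_x, m_y, m_xy]
      simp [pow_two, mul_assoc])]
    simp only [Prod.mk_mul_mk, one_mul, mul_one, gg_one, Mv_11, Mv_one, Mv_x, Mv_y, Mv_xy]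
    rw [S.l_x2, S.XX']
  -- (g,g)(1,1)
  · rw [S.γ_eq _ _ 1 (by simp [Prod.mk_mul_mk, mul_assoc])]
    simp [Prod.mk_mul_mk]
  -- (g,g)(1,g) : (x*y)*y*x⁻¹ = y²
  · rw [S.γ_eq _ _ ⟨S.y ^ 2, S.hy2⟩ (by
      simp only [Prod.mk_mul_mk, one_mul, mul_one, gg_one, m_11, m_one, m_x, m_y, m_xy]
      show S.x * S.y * S.y * S.x⁻¹ = S.y ^ 2
      calc S.x * S.y * S.y * S.x⁻¹ = (S.x * S.y ^ 2) * S.x⁻¹ := by simp [pow_two, mul_assoc]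
        _ = (S.y ^ 2 * S.x) * S.x⁻¹ := by rw [S.hy2c]
        _ = S.y ^ 2 := by simp [pow_two, mul_assoc])]
    simp only [Prod.mk_mul_mk, one_mul, mul_one, gg_one, Mv_11, Mv_one, Mv_x, Mv_y, Mv_xy]
    rw [S.hu, mul_assoc, S.YY, mul_smul_comm, mul_one]
  -- (g,g)(g,1) : (x*y)*x*y⁻¹ = s*x²
  · rw [S.γ_eq _ _ (⟨S.s, S.hs⟩ * ⟨S.x ^ 2, S.hx2⟩) (by
      simp only [Prod.mk_mul_mk, one_mul, mul_one, gg_one, m_11, m_one, m_x, m_y, m_xy]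
      show S.x * S.y * S.x * S.y⁻¹ = S.s * S.x ^ 2
      calc S.x * S.y * S.x * S.y⁻¹ = S.x * (S.y * S.x) * S.y⁻¹ := by simp [pow_two, mul_assoc]
        _ = S.x * (S.s * (S.x * S.y)) * S.y⁻¹ := by rw [S.hyx]
        _ = (S.x * S.s) * ((S.x * S.y) * S.y⁻¹) := by simp [pow_two, mul_assoc]
        _ = (S.s * S.x) * ((S.x * S.y) * S.y⁻¹) := by rw [S.hsc]
        _ = S.s * S.x ^ 2 := by simp [pow_two, mul_assoc])]
    simp only [Prod.mk_mul_mk, one_mul, mul_one, gg_one, Mv_11, Mv_one, Mv_x, Mv_y, Mv_xy]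
    rw [_root_.map_mul, Units.val_mul, S.hls, S.l_x2]
    rw [mul_assoc, S.YX, mul_neg, S.XX']
    module
  -- (g,g)(g,g) : (x*y)*(x*y) = s*x²*y²
  · rw [S.γ_eq _ _ (⟨S.s, S.hs⟩ * ⟨S.x ^ 2, S.hx2⟩ * ⟨S.y ^ 2, S.hy2⟩) (by
      simp only [Prod.mk_mul_mk, one_mul, mul_one, gg_one, m_11, m_one, m_x, m_y, m_xy]
      show S.x * S.y * (S.x * S.y) * 1⁻¹ = S.s * S.x ^ 2 * S.y ^ 2
      calc S.x * S.y * (S.x * S.y) * 1⁻¹ = S.x * (S.y * S.x) * S.y := by simp [pow_two, mul_assoc]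
        _ = S.x * (S.s * (S.x * S.y)) * S.y := by rw [S.hyx]
        _ = (S.x * S.s) * (S.x * S.y * S.y) := by simp [pow_two, mul_assoc]
        _ = (S.s * S.x) * (S.x * S.y * S.y) := by rw [S.hsc]
        _ = S.s * S.x ^ 2 * S.y ^ 2 := by simp [pow_two, mul_assoc])]
    simp only [Prod.mk_mul_mk, one_mul, mul_one, gg_one, Mv_11, Mv_one, Mv_x, Mv_y, Mv_xy]
    rw [_root_.map_mul, _root_.map_mul, Units.val_mul, Units.val_mul, S.hls, S.l_x2, S.hu]
    rw [mul_assoc, S.YX', S.YY, mul_neg, S.XX']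
    module

lemma central_shuffle {g h A B C : G} (hz : ∀ w : G, (h * B⁻¹) * w = w * (h * B⁻¹)) :
    (g * A⁻¹) * (h * B⁻¹) * (A * B * C⁻¹) = g * h * C⁻¹ := by
  calc (g * A⁻¹) * (h * B⁻¹) * (A * B * C⁻¹)
      = (g * A⁻¹) * ((h * B⁻¹) * A) * (B * C⁻¹) := by group
    _ = (g * A⁻¹) * (A * (h * B⁻¹)) * (B * C⁻¹) := by rw [hz A]
    _ = g * ((h * B⁻¹) * B) * C⁻¹ := by group
    _ = g * h * C⁻¹ := by group

lemma zg_mul (g h : G) : S.zg (g * h) = S.zg g * S.zg h * S.γ (S.c g) (S.c h) := by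
  apply Subtype.ext
  show (g * h) * (S.m (S.c (g * h)))⁻¹
      = (g * (S.m (S.c g))⁻¹) * (h * (S.m (S.c h))⁻¹)
        * (S.m (S.c g) * S.m (S.c h) * (S.m (S.c g * S.c h))⁻¹)
  rw [_root_.map_mul]
  exact (central_shuffle (fun w => (Subgroup.mem_center_iff.1 (S.m_mem h) w).symm)).symm

lemma fmat_mul (g h : G) : S.fmat (g * h) = S.fmat g * S.fmat h := by
  unfold fmat
  rw [S.zg_mul, _root_.map_mul, _root_.map_mul, Units.val_mul, Units.val_mul,
    _root_.map_mul S.c, smul_mul_assoc, mul_smul_comm, S.Mv_mul, smul_smul, smul_smul]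

lemma zg_one : S.zg 1 = 1 := by
  apply Subtype.ext
  show (1 : G) * (S.m (S.c 1))⁻¹ = 1
  rw [_root_.map_one, S.m_one]
  simp

lemma fmat_one : S.fmat 1 = 1 := by
  unfold fmat
  rw [S.zg_one, _root_.map_one, _root_.map_one, S.Mv_one]
  simp

noncomputable def F : G →* Matrix (Fin 2) (Fin 2) ℂ :=
  { toFun := S.fmat, map_one' := S.fmat_one, map_mul' := S.fmat_mul }

lemma fmat_central {g : G} (hg : g ∈ Subgroup.center G) :
    S.fmat g = (S.l ⟨g, hg⟩ : ℂ) • 1 := by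
  have hcg : S.c g = 1 := (S.hker g).2 hg
  have hzg : S.zg g = ⟨g, hg⟩ := by
    apply Subtype.ext
    show g * (S.m (S.c g))⁻¹ = g
    rw [hcg, S.m_one]; simp
  unfold fmat
  rw [hcg, hzg, S.Mv_one]

lemma fmat_y : S.fmat S.y = S.Ym := by
  have hzy : S.zg S.y = 1 := by
    apply Subtype.ext
    show S.y * (S.m (S.c S.y))⁻¹ = 1
    rw [S.hcy, S.m_y]; simp
  unfold fmat
  rw [hzy, _root_.map_one, S.hcy, S.Mv_y]
  simp

lemma trace_Mv {v : Z2} (hv : v ≠ 1) : (S.Mv v).trace = 0 := by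
  obtain ⟨a, b⟩ := v
  rcases cases2 a with rfl | rfl <;> rcases cases2 b with rfl | rfl
  · exact absurd rfl hv
  · rw [S.Mv_y]; simp [Ym, Matrix.trace_fin_two_of]
  · rw [S.Mv_x]; simp [Xm, Matrix.trace_fin_two_of]
  · rw [S.Mv_xy]
    simp [Xm, Ym, Matrix.trace_fin_two, Matrix.mul_apply, Fin.sum_univ_two]

noncomputable def φ : MonoidAlgebra ℂ G →ₐ[ℂ] Matrix (Fin 2) (Fin 2) ℂ :=
  MonoidAlgebra.lift ℂ _ G S.F

lemma φ_single (g : G) (b : ℂ) : S.φ (MonoidAlgebra.single g b) = b • S.fmat g :=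
  MonoidAlgebra.lift_single _ _ _

lemma φ_inv (q : MonoidAlgebra ℂ G) :
    S.φ (MonoidAlgebra.mapDomain (canonicalInvolution S.s) q)
      = (S.φ q).trace • (1 : Matrix (Fin 2) (Fin 2) ℂ) - S.φ q := by
  induction q using MonoidAlgebra.induction_linear with
  | zero => simp [Finsupp.mapDomain_zero]
  | add f g hf hg =>
      rw [MonoidAlgebra.mapDomain_add, map_add, hf, hg, map_add, Matrix.trace_add, add_smul]
      abel
  | single g b =>
      rw [MonoidAlgebra.mapDomain_single]
      show S.φ (MonoidAlgebra.single (canonicalInvolution S.s g) b)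
        = (S.φ (MonoidAlgebra.single g b)).trace • 1 - S.φ (MonoidAlgebra.single g b)
      rw [S.φ_single, S.φ_single]
      by_cases hg : g ∈ Subgroup.center G
      · rw [show canonicalInvolution S.s g = g from by
          simp [canonicalInvolution, hg]]
        rw [S.fmat_central hg]
        rw [Matrix.trace_smul, Matrix.trace_smul, Matrix.trace_one]
        norm_num
        module
      · rw [show canonicalInvolution S.s g = S.s * g from by
          simp [canonicalInvolution, hg]]
        have hfs : S.fmat (S.s * g) = -S.fmat g := by
          rw [S.fmat_mul, S.fmat_central S.hs, S.hls]
          simp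
        have htr : (S.fmat g).trace = 0 := by
          unfold fmat
          rw [Matrix.trace_smul, S.trace_Mv (fun h => hg ((S.hker g).1 h)), smul_zero]
        rw [hfs, Matrix.trace_smul, htr, smul_zero, zero_smul, zero_sub, smul_neg]

lemma α_ne_zero : S.α ≠ 0 := by
  intro h
  exact Units.ne_zero (S.l ⟨S.y ^ 2, S.hy2⟩) (by rw [S.hu, h]; ring)

lemma proj_eq (p : MonoidAlgebra ℂ G) (hp2 : p * p = p)
    (hps : MonoidAlgebra.mapDomain (canonicalInvolution S.s) p = p) :
    S.φ p = 0 ∨ S.φ p = 1 := by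
  set P := S.φ p with hP
  have hPP : P * P = P := by rw [hP, ← _root_.map_mul, hp2]
  have hτ : P.trace • (1 : Matrix (Fin 2) (Fin 2) ℂ) - P = P := by
    conv_rhs => rw [hP, ← hps, S.φ_inv p]
  have h2P : P.trace • (1 : Matrix (Fin 2) (Fin 2) ℂ) = P + P :=
    sub_eq_iff_eq_add.1 hτ
  have hPc : P = (P.trace / 2) • 1 := by
    have h2 : (2 : ℂ) • P = P.trace • (1 : Matrix (Fin 2) (Fin 2) ℂ) := by
      rw [h2P, two_smul]
    calc P = (2 : ℂ)⁻¹ • ((2 : ℂ) • P) := by rw [smul_smul]; norm_num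
      _ = (2 : ℂ)⁻¹ • (P.trace • (1 : Matrix (Fin 2) (Fin 2) ℂ)) := by rw [h2]
      _ = (P.trace / 2) • 1 := by rw [smul_smul]; congr 1; ring
  set cc : ℂ := P.trace / 2
  have hPP' : (cc * cc) • (1 : Matrix (Fin 2) (Fin 2) ℂ) = cc • 1 := by
    have := hPP
    rw [hPc] at this
    rw [← this, smul_mul_smul_comm, mul_one]
  have hcc : cc * cc = cc := by
    have h00 := congrArg (fun M : Matrix (Fin 2) (Fin 2) ℂ => M 0 0) hPP'
    simpa [Matrix.smul_apply, Matrix.one_apply] using h00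
  have : cc = 0 ∨ cc = 1 := by
    rcases mul_eq_zero.1 (show cc * (cc - 1) = 0 by rw [mul_sub, hcc]; ring) with h | h
    · exact Or.inl h
    · exact Or.inr (by linear_combination h)
  rcases this with h | h
  · left; rw [hPc, h, zero_smul]
  · right; rw [hPc, h, one_smul]

lemma not_starClean :
    ¬ StarClean (R := MonoidAlgebra ℂ G) (MonoidAlgebra.mapDomain (canonicalInvolution S.s)) := by
  intro hSC
  set a : MonoidAlgebra ℂ G :=
    MonoidAlgebra.single (1 : G) (1/2 : ℂ) + MonoidAlgebra.single S.y ((2 * S.α)⁻¹) with ha_def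
  obtain ⟨u, p, hu, hp2, hps, ha⟩ := hSC a
  have hα := S.α_ne_zero
  have hφa : S.φ a = !![1, 0; 0, 0] := by
    rw [ha_def, map_add, S.φ_single, S.φ_single, S.fmat_y, S.fmat_one]
    ext i j
    fin_cases i <;> fin_cases j <;>
      simp [Ym, Matrix.one_apply] <;> field_simp <;> ring
  have hφu : S.φ u = S.φ a - S.φ p := by
    rw [ha, map_add]; abel
  have hdet : IsUnit (S.φ u).det := (Matrix.isUnit_iff_isUnit_det _).1 (hu.map S.φ)
  rcases S.proj_eq p hp2 hps with h0 | h1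
  · rw [hφu, hφa, h0, sub_zero] at hdet
    simp [Matrix.det_fin_two_of] at hdet
  · rw [hφu, hφa, h1] at hdet
    rw [Matrix.det_fin_two] at hdet
    simp [Matrix.sub_apply, Matrix.one_apply] at hdet

end Setup

end SLC17


open scoped commutatorElement

theorem stmt17 {G : Type*} [Group G]
    (s : G) (hs : s ∈ Subgroup.center G) (hs2 : s ^ 2 = 1) (hs1 : s ≠ 1)
    (hG' : (commutator G : Set G) = {1, s})
    (hSLC : Nonempty ((G ⧸ Subgroup.center G) ≃*
      Multiplicative (ZMod 2) × Multiplicative (ZMod 2))) :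
    ¬ StarClean (R := MonoidAlgebra ℂ G) (MonoidAlgebra.mapDomain (canonicalInvolution s)) := by
  obtain ⟨e⟩ := hSLC
  have hss : s * s = 1 := by rw [← pow_two]; exact hs2
  -- the character
  have hz2 : (⟨s, hs⟩ : Subgroup.center G) ^ 2 = 1 := Subtype.ext (by
    show s ^ 2 = 1
    exact hs2)
  have hz1 : (⟨s, hs⟩ : Subgroup.center G) ≠ 1 := fun h => hs1 (congrArg Subtype.val h)
  open scoped IsMulCommutative in
  obtain ⟨l, hl⟩ := exists_character (⟨s, hs⟩ : Subgroup.center G) hz2 hz1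
  -- the quotient map
  let c : G →* SLC17.Z2 := e.toMonoidHom.comp (QuotientGroup.mk' (Subgroup.center G))
  have hker : ∀ g : G, c g = 1 ↔ g ∈ Subgroup.center G := by
    intro g
    constructor
    · intro h
      have h1 : e (QuotientGroup.mk' (Subgroup.center G) g) = e 1 := by
        rw [map_one]; exact h
      have h2 : QuotientGroup.mk' (Subgroup.center G) g = 1 := e.injective h1
      rw [← QuotientGroup.ker_mk' (Subgroup.center G)]
      exact h2
    · intro h
      have h2 : QuotientGroup.mk' (Subgroup.center G) g = 1 := by
        rw [← MonoidHom.mem_ker, QuotientGroup.ker_mk' (Subgroup.center G)]; exact h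
      show e (QuotientGroup.mk' (Subgroup.center G) g) = 1
      rw [h2, map_one]
  obtain ⟨x, hx⟩ := QuotientGroup.mk'_surjective (Subgroup.center G)
    (e.symm (Multiplicative.ofAdd 1, 1))
  obtain ⟨y, hy⟩ := QuotientGroup.mk'_surjective (Subgroup.center G)
    (e.symm (1, Multiplicative.ofAdd 1))
  have hcx : c x = (Multiplicative.ofAdd 1, 1) := by
    show e (QuotientGroup.mk' _ x) = _
    rw [hx, MulEquiv.apply_symm_apply]
  have hcy : c y = (1, Multiplicative.ofAdd 1) := by
    show e (QuotientGroup.mk' _ y) = _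
    rw [hy, MulEquiv.apply_symm_apply]
  have hx2 : x ^ 2 ∈ Subgroup.center G := by
    rw [← hker, map_pow, hcx]; decide
  have hy2 : y ^ 2 ∈ Subgroup.center G := by
    rw [← hker, map_pow, hcy]; decide
  -- commutator of x and y is s
  have hsmem : s ∈ commutator G := by
    rw [← SetLike.mem_coe, hG']
    right; rfl
  have hxyc : ⁅x, y⁆ ∈ commutator G := by
    rw [commutator_def]
    exact Subgroup.commutator_mem_commutator (Subgroup.mem_top x) (Subgroup.mem_top y)
  have hcases : ⁅x, y⁆ = 1 ∨ ⁅x, y⁆ = s := by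
    have : ⁅x, y⁆ ∈ (({1, s} : Set G)) := by rw [← hG']; exact hxyc
    exact this
  have hyx : y * x = s * (x * y) := by
    rcases hcases with h | h
    · -- x and y commute: then G is abelian, contradiction
      exfalso
      have hxyC : Commute x y := commutatorElement_eq_one_iff_commute.1 h
      have hw : ∀ a b a' b' : ℕ, Commute (x ^ a * y ^ b) (x ^ a' * y ^ b') := by
        intro a b a' b'
        have h1 : Commute x (x ^ a' * y ^ b') :=
          ((Commute.refl x).pow_right a').mul_right (hxyC.pow_right b')
        have h2 : Commute y (x ^ a' * y ^ b') :=
          (hxyC.symm.pow_right a').mul_right ((Commute.refl y).pow_right b')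
        exact (h1.pow_left a).mul_left (h2.pow_left b)
      have hcent : ∀ z : G, z ∈ Subgroup.center G → ∀ w : G, Commute z w :=
        fun z hz w => (Subgroup.mem_center_iff.1 hz w).symm
      have hall : ∀ g h : G, Commute g h := by
        intro g h
        have hdg : g * (x ^ SLC17.εe (c g).1 * y ^ SLC17.εe (c g).2)⁻¹ ∈ Subgroup.center G := by
          rw [← hker, _root_.map_mul, map_inv, SLC17.c_w c x y hcx hcy (c g), mul_inv_cancel]
        have hdh : h * (x ^ SLC17.εe (c h).1 * y ^ SLC17.εe (c h).2)⁻¹ ∈ Subgroup.center G := by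
          rw [← hker, _root_.map_mul, map_inv, SLC17.c_w c x y hcx hcy (c h), mul_inv_cancel]
        have hgeq : g = (g * (x ^ SLC17.εe (c g).1 * y ^ SLC17.εe (c g).2)⁻¹)
            * (x ^ SLC17.εe (c g).1 * y ^ SLC17.εe (c g).2) := by group
        have hheq : h = (h * (x ^ SLC17.εe (c h).1 * y ^ SLC17.εe (c h).2)⁻¹)
            * (x ^ SLC17.εe (c h).1 * y ^ SLC17.εe (c h).2) := by group
        rw [hgeq, hheq]
        have c1 : Commute (g * (x ^ SLC17.εe (c g).1 * y ^ SLC17.εe (c g).2)⁻¹)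
            ((h * (x ^ SLC17.εe (c h).1 * y ^ SLC17.εe (c h).2)⁻¹)
              * (x ^ SLC17.εe (c h).1 * y ^ SLC17.εe (c h).2)) := hcent _ hdg _
        have c2 : Commute (x ^ SLC17.εe (c g).1 * y ^ SLC17.εe (c g).2)
            ((h * (x ^ SLC17.εe (c h).1 * y ^ SLC17.εe (c h).2)⁻¹)
              * (x ^ SLC17.εe (c h).1 * y ^ SLC17.εe (c h).2)) :=
          ((hcent _ hdh _).symm).mul_right (hw _ _ _ _)
        exact c1.mul_left c2
      have hle : commutator G ≤ ⊥ := by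
        rw [commutator_def, Subgroup.commutator_le]
        intro g1 _ g2 _
        rw [Subgroup.mem_bot]
        exact commutatorElement_eq_one_iff_commute.2 (hall g1 g2)
      exact hs1 (Subgroup.mem_bot.1 (hle hsmem))
    · -- ⁅x,y⁆ = s
      have hxy' : x * y = s * (y * x) := by
        rw [← h]; group
      have hsinv : s⁻¹ = s := inv_eq_of_mul_eq_one_right hss
      calc y * x = s⁻¹ * (s * (y * x)) := by group
        _ = s⁻¹ * (x * y) := by rw [← hxy']
        _ = s * (x * y) := by rw [hsinv]
  obtain ⟨α, hα⟩ := IsAlgClosed.exists_pow_nat_eq ((l ⟨y ^ 2, hy2⟩ : ℂ)) (n := 2) (by norm_num)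
  have hls : (l ⟨s, hs⟩ : ℂ) = -1 := by rw [hl]; simp
  let S : SLC17.Setup G :=
    { s := s, x := x, y := y, l := l, c := c, hker := hker, hcx := hcx, hcy := hcy,
      hs := hs, hyx := hyx, hls := hls, α := α, hx2 := hx2, hy2 := hy2, hu := hα.symm }
  exact S.not_starClean
end
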